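/- arXiv:2012.15707 — 7 statements merged into one kernel-verified Lean document; each statement's English description precedes it below -/
import Mathlib

section
/- Let T be a fully exact subcategory of an exact category E. If T is weakly right admissible (i.e. the inclusion ι_* : T → E admits a right adjoint ι^! and each adjunction counit ι_*ι^!E → E is an inflation), then the pair (T, T^{⊥₀}) is a torsion pair in E, where T^{⊥₀} = {E ∈ E | Hom(T,E) = 0}: every object E of E fits into a conflation T' → E → F with T' ∈ T and F ∈ T^{⊥₀}. -/
open CategoryTheory CategoryTheory.Limits ZeroObject

universe v u

namespace ExactCatPaper

variable (E : Type u) [Category.{v} E] [Preadditive E] [HasZeroObject E]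

/-- An exact structure on an additive category `E`, following Quillen/Keller:
a class of conflations (kernel–cokernel pairs) closed under isomorphism,
containing identities, with deflations closed under composition and stable
under pullback, and inflations stable under pushout. -/
structure ExactStructure where
  conf : ∀ {X Y Z : E}, (X ⟶ Y) → (Y ⟶ Z) → Prop
  comp_zero : ∀ {X Y Z : E} {i : X ⟶ Y} {d : Y ⟶ Z}, conf i d → i ≫ d = 0
  is_kernel : ∀ {X Y Z : E} {i : X ⟶ Y} {d : Y ⟶ Z}, conf i d →
    ∀ {W : E} (f : W ⟶ Y), f ≫ d = 0 → ∃! g : W ⟶ X, g ≫ i = f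
  is_cokernel : ∀ {X Y Z : E} {i : X ⟶ Y} {d : Y ⟶ Z}, conf i d →
    ∀ {W : E} (f : Y ⟶ W), i ≫ f = 0 → ∃! g : Z ⟶ W, d ≫ g = f
  conf_iso : ∀ {X Y Z X' Y' Z' : E} (eX : X ≅ X') (eY : Y ≅ Y') (eZ : Z ≅ Z')
      {i : X ⟶ Y} {d : Y ⟶ Z}, conf i d →
      conf (eX.inv ≫ i ≫ eY.hom) (eY.inv ≫ d ≫ eZ.hom)
  conf_id : ∀ X : E, conf (0 : (0 : E) ⟶ X) (𝟙 X)
  defl_comp : ∀ {X Y Z : E} {d : X ⟶ Y} {d' : Y ⟶ Z},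
      (∃ (A : E) (i : A ⟶ X), conf i d) → (∃ (A : E) (i : A ⟶ Y), conf i d') →
      ∃ (A : E) (i : A ⟶ X), conf i (d ≫ d')
  pullback_defl : ∀ {Y Z W : E} (d : Y ⟶ Z) (f : W ⟶ Z),
      (∃ (A : E) (i : A ⟶ Y), conf i d) →
      ∃ (P : E) (p₁ : P ⟶ Y) (p₂ : P ⟶ W), IsPullback p₁ p₂ d f ∧
        ∃ (A : E) (i : A ⟶ P), conf i p₂
  pushout_infl : ∀ {X Y W : E} (i : X ⟶ Y) (f : X ⟶ W),
      (∃ (Z : E) (d : Y ⟶ Z), conf i d) →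
      ∃ (P : E) (j : W ⟶ P) (g : Y ⟶ P), IsPushout i f g j ∧
        ∃ (Z : E) (d : P ⟶ Z), conf j d

variable {E}

/-- `i` is an inflation: it is part of some conflation. -/
def ExactStructure.IsInflation (S : ExactStructure E) {X Y : E} (i : X ⟶ Y) : Prop :=
  ∃ (Z : E) (d : Y ⟶ Z), S.conf i d

/-- `d` is a deflation: it is part of some conflation. -/
def ExactStructure.IsDeflation (S : ExactStructure E) {Y Z : E} (d : Y ⟶ Z) : Prop :=
  ∃ (X : E) (i : X ⟶ Y), S.conf i d

/-- The right Hom-orthogonal `T^{⊥₀}` of a full subcategory. -/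
def homOrthRight (T : Set E) : Set E :=
  {X | ∀ t ∈ T, ∀ f : t ⟶ X, f = 0}

/-- The left Hom-orthogonal `^{⊥₀}F` of a full subcategory. -/
def homOrthLeft (F : Set E) : Set E :=
  {X | ∀ f' ∈ F, ∀ g : X ⟶ f', g = 0}

/-- A full subcategory is closed under extensions. -/
def ExtClosed (S : ExactStructure E) (T : Set E) : Prop :=
  ∀ {X Y Z : E} {i : X ⟶ Y} {d : Y ⟶ Z}, S.conf i d → X ∈ T → Z ∈ T → Y ∈ T

/-- `T` is weakly right admissible: a fully exact (extension-closed) subcategory such that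
the inclusion admits a right adjoint (expressed pointwise as a coreflection) whose
adjunction counit is an inflation. -/
def IsWeaklyRightAdmissible (S : ExactStructure E) (T : Set E) : Prop :=
  ExtClosed S T ∧
  ∀ X : E, ∃ (T' : E) (ε : T' ⟶ X), T' ∈ T ∧ S.IsInflation ε ∧
    ∀ W : E, W ∈ T → ∀ f : W ⟶ X, ∃! g : W ⟶ T', g ≫ ε = f

/-- `F` is weakly left admissible: the dual notion. -/
def IsWeaklyLeftAdmissible (S : ExactStructure E) (F : Set E) : Prop :=
  ExtClosed S F ∧
  ∀ X : E, ∃ (F' : E) (η : X ⟶ F'), F' ∈ F ∧ S.IsDeflation η ∧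
    ∀ W : E, W ∈ F → ∀ f : X ⟶ W, ∃! g : F' ⟶ W, η ≫ g = f

/-- `(T, F)` is a torsion pair: `Hom(T,F) = 0` and every object fits into a conflation
with torsion part in `T` and torsion-free part in `F`. -/
def IsTorsionPair (S : ExactStructure E) (T F : Set E) : Prop :=
  (∀ t ∈ T, ∀ f ∈ F, ∀ g : t ⟶ f, g = 0) ∧
  ∀ X : E, ∃ (t f : E) (i : t ⟶ X) (d : X ⟶ f), t ∈ T ∧ f ∈ F ∧ S.conf i d

/-- The right perpendicular subcategory `T^⊥` (Hom and Ext¹ vanishing; Ext¹-vanishing is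
expressed by the splitting of all conflations `X → M → t` with `t ∈ T`). -/
def rightPerp (S : ExactStructure E) (T : Set E) : Set E :=
  {X | ∀ t ∈ T, (∀ f : t ⟶ X, f = 0) ∧
    ∀ (M : E) (i : X ⟶ M) (d : M ⟶ t), S.conf i d → ∃ r : M ⟶ X, i ≫ r = 𝟙 X}

/-- A torsion pair `(T,F)` is perpendicular if moreover `Ext¹(T,F) = 0`, i.e. every
conflation `f' → X → t` with `f' ∈ F`, `t ∈ T` splits. -/
def IsPerpTorsionPair (S : ExactStructure E) (T F : Set E) : Prop :=
  IsTorsionPair S T F ∧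
  ∀ {f' X t : E} (i : f' ⟶ X) (d : X ⟶ t), S.conf i d → f' ∈ F → t ∈ T →
    ∃ r : X ⟶ f', i ≫ r = 𝟙 f'


/-- If `T` is a weakly right admissible fully exact subcategory of an exact
category `E`, then `(T, T^{⊥₀})` is a torsion pair in `E`: every object `X` of `E` fits into
a conflation `T' → X → F` with `T' ∈ T` and `F ∈ T^{⊥₀}` (and `Hom(T, T^{⊥₀}) = 0`). -/
theorem weaklyRightAdmissible_torsionPair
    (S : ExactStructure E) (T : Set E) (hT : IsWeaklyRightAdmissible S T) :
    IsTorsionPair S T (homOrthRight T) := by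
  obtain ⟨hExt, hCor⟩ := hT
  refine ⟨fun t ht f hf g => hf t ht g, fun X => ?_⟩
  obtain ⟨T', ε, hT'T, ⟨F, d, hconf⟩, huniv⟩ := hCor X
  refine ⟨T', F, ε, d, hT'T, ?_, hconf⟩
  -- show F ∈ T^{⊥₀}
  intro t ht f
  -- pull back d along f
  obtain ⟨P, p₁, p₂, hpb, A, i, hconfP⟩ := S.pullback_defl d f ⟨T', ε, hconf⟩
  -- A ≅ T'
  have hip₂ : i ≫ p₂ = 0 := S.comp_zero hconfP
  have hεd : ε ≫ d = 0 := S.comp_zero hconf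
  -- u : A ⟶ T'
  have hAd : (i ≫ p₁) ≫ d = 0 := by
    rw [Category.assoc, hpb.w, ← Category.assoc, hip₂, zero_comp]
  obtain ⟨u, hu, -⟩ := S.is_kernel hconf (i ≫ p₁) hAd
  -- v : T' ⟶ P via pullback
  have hvw : ε ≫ d = (0 : T' ⟶ t) ≫ f := by rw [hεd, zero_comp]
  set v : T' ⟶ P := hpb.lift ε 0 hvw with hvdef
  have hv₁ : v ≫ p₁ = ε := hpb.lift_fst ε 0 hvw
  have hv₂ : v ≫ p₂ = 0 := hpb.lift_snd ε 0 hvw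
  -- w : T' ⟶ A
  obtain ⟨w, hw, -⟩ := S.is_kernel hconfP v hv₂
  -- i and ε are mono
  have mono_i : ∀ {W : E} (a b : W ⟶ A), a ≫ i = b ≫ i → a = b := by
    intro W a b hab
    obtain ⟨g, -, hg⟩ := S.is_kernel hconfP (b ≫ i)
      (by rw [Category.assoc, hip₂, comp_zero])
    exact (hg a hab).trans (hg b rfl).symm
  have mono_ε : ∀ {W : E} (a b : W ⟶ T'), a ≫ ε = b ≫ ε → a = b := by
    intro W a b hab
    obtain ⟨g, -, hg⟩ := S.is_kernel hconf (b ≫ ε)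
      (by rw [Category.assoc, hεd, comp_zero])
    exact (hg a hab).trans (hg b rfl).symm
  have huv : u ≫ v = i := by
    apply hpb.hom_ext
    · rw [Category.assoc, hv₁, hu]
    · rw [Category.assoc, hv₂, comp_zero, hip₂]
  have h1 : u ≫ w = 𝟙 A := by
    apply mono_i
    rw [Category.assoc, hw, huv, Category.id_comp]
  have h2 : w ≫ u = 𝟙 T' := by
    apply mono_ε
    rw [Category.assoc, hu, ← Category.assoc, hw, hv₁, Category.id_comp]
  -- transfer conflation to get conf (w ≫ i) p₂, so P ∈ T
  have hconfP' : S.conf (w ≫ i) p₂ := by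
    have := S.conf_iso (X' := T') ⟨u, w, h1, h2⟩ (Iso.refl P) (Iso.refl t) hconfP
    simpa using this
  have hP : P ∈ T := hExt hconfP' hT'T ht
  -- p₁ factors through ε, hence p₁ ≫ d = 0
  obtain ⟨g, hg, -⟩ := huniv P hP p₁
  have hp₁d : p₁ ≫ d = 0 := by rw [← hg, Category.assoc, hεd, comp_zero]
  -- p₂ is epi
  have epi_p₂ : ∀ {W : E} (a b : t ⟶ W), p₂ ≫ a = p₂ ≫ b → a = b := by
    intro W a b hab
    obtain ⟨g', -, hg'⟩ := S.is_cokernel hconfP (p₂ ≫ b)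
      (by rw [← Category.assoc, hip₂, zero_comp])
    exact (hg' a hab).trans (hg' b rfl).symm
  apply epi_p₂
  rw [← hpb.w, hp₁d, comp_zero]

end ExactCatPaper
end

section
/- There is an involutive duality between weakly right admissible subcategories T and weakly left admissible subcategories F of an exact category E, given by T ↦ T^{⊥₀} and F ↦ ^{⊥₀}F; in particular, if T is weakly right admissible then T = ^{⊥₀}(T^{⊥₀}), T is closed under quotients (cokernels of deflations out of objects of T land in T up to the torsion decomposition), and T^{⊥₀} is closed under subobjects. -/
open CategoryTheory CategoryTheory.Limits ZeroObject

universe v u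

namespace ExactCatPaper

variable (E : Type u) [Category.{v} E] [Preadditive E] [HasZeroObject E]

variable {E}

/-- A full subcategory (as a class of objects) closed under isomorphisms. -/
def IsoClosed (T : Set E) : Prop := ∀ {X Y : E}, (X ≅ Y) → X ∈ T → Y ∈ T


section Aux

lemma ExactStructure.infl_mono (S : ExactStructure E) {X Y Z : E} {i : X ⟶ Y} {d : Y ⟶ Z}
    (h : S.conf i d) : Mono i := by
  constructor
  intro W a b hab
  obtain ⟨g, -, hu⟩ := S.is_kernel h (a ≫ i)
    (by rw [Category.assoc, S.comp_zero h, Limits.comp_zero])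
  exact (hu a rfl).trans (hu b hab.symm).symm

lemma ExactStructure.defl_epi (S : ExactStructure E) {X Y Z : E} {i : X ⟶ Y} {d : Y ⟶ Z}
    (h : S.conf i d) : Epi d := by
  constructor
  intro W a b hab
  obtain ⟨g, -, hu⟩ := S.is_cokernel h (d ≫ a)
    (by rw [← Category.assoc, S.comp_zero h, Limits.zero_comp])
  exact (hu a rfl).trans (hu b hab.symm).symm

lemma ExactStructure.iso_of_d_zero (S : ExactStructure E) {X Y Z : E} {i : X ⟶ Y} {d : Y ⟶ Z}
    (h : S.conf i d) (hd : d = 0) : ∃ g : Y ⟶ X, i ≫ g = 𝟙 X ∧ g ≫ i = 𝟙 Y := by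
  obtain ⟨g, hg, -⟩ := S.is_kernel h (𝟙 Y) (by rw [Category.id_comp, hd])
  refine ⟨g, ?_, hg⟩
  have := S.infl_mono h
  rw [← cancel_mono i, Category.assoc, hg, Category.comp_id, Category.id_comp]

lemma ExactStructure.iso_of_i_zero (S : ExactStructure E) {X Y Z : E} {i : X ⟶ Y} {d : Y ⟶ Z}
    (h : S.conf i d) (hi : i = 0) : ∃ g : Z ⟶ Y, d ≫ g = 𝟙 Y ∧ g ≫ d = 𝟙 Z := by
  obtain ⟨g, hg, -⟩ := S.is_cokernel h (𝟙 Y) (by rw [Category.comp_id, hi])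
  refine ⟨g, hg, ?_⟩
  have := S.defl_epi h
  rw [← cancel_epi d, ← Category.assoc, hg, Category.comp_id, Category.id_comp]

/-- Torsion decomposition for a weakly right admissible subcategory. -/
lemma wra_decomp {S : ExactStructure E} {T : Set E} (hIso : IsoClosed T)
    (hT : IsWeaklyRightAdmissible S T) (X : E) :
    ∃ (t f : E) (ε : t ⟶ X) (d : X ⟶ f), t ∈ T ∧ f ∈ homOrthRight T ∧ S.conf ε d ∧
      (∀ W : E, W ∈ T → ∀ g : W ⟶ X, ∃! h : W ⟶ t, h ≫ ε = g) := by
  obtain ⟨t, ε, ht, ⟨f, d, hconf⟩, huniv⟩ := hT.2 X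
  refine ⟨t, f, ε, d, ht, ?_, hconf, huniv⟩
  intro s hs φ
  obtain ⟨P, p₁, p₂, hpb, A, ι, hconfP⟩ := S.pullback_defl d φ ⟨t, ε, hconf⟩
  have hεd : ε ≫ d = 0 := S.comp_zero hconf
  set u : t ⟶ P := hpb.lift ε 0 (by rw [hεd, Limits.zero_comp]) with hu
  have hup₁ : u ≫ p₁ = ε := hpb.lift_fst _ _ _
  have hup₂ : u ≫ p₂ = 0 := hpb.lift_snd _ _ _
  obtain ⟨k, hk, -⟩ := S.is_kernel hconfP u hup₂
  have hιp₂ : ι ≫ p₂ = 0 := S.comp_zero hconfP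
  have hc : (ι ≫ p₁) ≫ d = 0 := by
    rw [Category.assoc, hpb.w, ← Category.assoc, hιp₂, Limits.zero_comp]
  obtain ⟨k', hk', -⟩ := S.is_kernel hconf (ι ≫ p₁) hc
  have hmι : Mono ι := S.infl_mono hconfP
  have hmε : Mono ε := S.infl_mono hconf
  have h1 : k' ≫ k = 𝟙 A := by
    rw [← cancel_mono ι, Category.id_comp, Category.assoc, hk]
    apply hpb.hom_ext
    · rw [Category.assoc, hup₁, hk']
    · rw [Category.assoc, hup₂, Limits.comp_zero, hιp₂]
  have h2 : k ≫ k' = 𝟙 t := by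
    rw [← cancel_mono ε, Category.id_comp, Category.assoc, hk', ← Category.assoc, hk, hup₁]
  have hA : A ∈ T := hIso (Iso.mk k k' h2 h1) ht
  have hP : P ∈ T := hT.1 hconfP hA hs
  obtain ⟨g, hg, -⟩ := huniv P hP p₁
  have hepi : Epi p₂ := S.defl_epi hconfP
  have hz : p₂ ≫ φ = 0 := by
    rw [← hpb.w, ← hg, Category.assoc, hεd, Limits.comp_zero]
  rw [← cancel_epi p₂, hz, Limits.comp_zero]

/-- Cotorsion decomposition for a weakly left admissible subcategory. -/
lemma wla_decomp {S : ExactStructure E} {F : Set E} (hIso : IsoClosed F)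
    (hF : IsWeaklyLeftAdmissible S F) (X : E) :
    ∃ (t f : E) (i : t ⟶ X) (η : X ⟶ f), t ∈ homOrthLeft F ∧ f ∈ F ∧ S.conf i η ∧
      (∀ W : E, W ∈ F → ∀ g : X ⟶ W, ∃! h : f ⟶ W, η ≫ h = g) := by
  obtain ⟨f, η, hf, ⟨t, i, hconf⟩, huniv⟩ := hF.2 X
  refine ⟨t, f, i, η, ?_, hf, hconf, huniv⟩
  intro s hs φ
  obtain ⟨P, j, h, hpo, Z, e, hconfP⟩ := S.pushout_infl i φ ⟨f, η, hconf⟩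
  have hiη : i ≫ η = 0 := S.comp_zero hconf
  set w : P ⟶ f := hpo.desc η 0 (by rw [hiη, Limits.comp_zero]) with hwdef
  have hhw : h ≫ w = η := hpo.inl_desc _ _ _
  have hjw : j ≫ w = 0 := hpo.inr_desc _ _ _
  obtain ⟨v, hv, -⟩ := S.is_cokernel hconfP w hjw
  have hje : j ≫ e = 0 := S.comp_zero hconfP
  have hc : i ≫ (h ≫ e) = 0 := by
    rw [← Category.assoc, hpo.w, Category.assoc, hje, Limits.comp_zero]
  obtain ⟨u, hu, -⟩ := S.is_cokernel hconf (h ≫ e) hc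
  have heη : Epi η := S.defl_epi hconf
  have hee : Epi e := S.defl_epi hconfP
  have h1 : u ≫ v = 𝟙 f := by
    rw [← cancel_epi η, ← Category.assoc, hu, Category.assoc, hv, hhw, Category.comp_id]
  have h2 : v ≫ u = 𝟙 Z := by
    rw [← cancel_epi e, ← Category.assoc, hv, Category.comp_id]
    apply hpo.hom_ext
    · rw [← Category.assoc, hhw, hu]
    · rw [← Category.assoc, hjw, Limits.zero_comp, hje]
  have hZ : Z ∈ F := hIso (Iso.mk u v h1 h2) hf
  have hP : P ∈ F := hF.1 hconfP hs hZ
  obtain ⟨g, hg, -⟩ := huniv P hP h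
  have hmono : Mono j := S.infl_mono hconfP
  have hz : φ ≫ j = 0 := by
    rw [← hpo.w, ← hg, ← Category.assoc, hiη, Limits.zero_comp]
  rw [← cancel_mono j, hz, Limits.zero_comp]

end Aux

/-- There is an involutive duality between weakly right admissible
subcategories `T` and weakly left admissible subcategories `F` of an exact category,
given by `T ↦ T^{⊥₀}` and `F ↦ ^{⊥₀}F`.  In particular, if `T` is weakly right
admissible then `T^{⊥₀}` is weakly left admissible and `T = ^{⊥₀}(T^{⊥₀})`, `T` is
closed under quotients, and `T^{⊥₀}` is closed under subobjects. -/
theorem weakly_admissible_duality (S : ExactStructure E) :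
    (∀ T : Set E, IsoClosed T → IsWeaklyRightAdmissible S T →
      IsWeaklyLeftAdmissible S (homOrthRight T) ∧
      homOrthLeft (homOrthRight T) = T ∧
      (∀ {t X : E} (d : t ⟶ X), Epi d → t ∈ T → X ∈ T) ∧
      (∀ {X f : E} (m : X ⟶ f), Mono m → f ∈ homOrthRight T → X ∈ homOrthRight T)) ∧
    (∀ F : Set E, IsoClosed F → IsWeaklyLeftAdmissible S F →
      IsWeaklyRightAdmissible S (homOrthLeft F) ∧
      homOrthRight (homOrthLeft F) = F) := by
  constructor
  · intro T hIso hT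
    have hdec := wra_decomp hIso hT
    refine ⟨⟨?_, ?_⟩, ?_, ?_, ?_⟩
    · intro X Y Z i d hconf hX hZ t ht f
      have hz : f ≫ d = 0 := hZ t ht (f ≫ d)
      obtain ⟨g, hg, -⟩ := S.is_kernel hconf f hz
      rw [← hg, hX t ht g, Limits.zero_comp]
    · intro X
      obtain ⟨t, f, ε, d, ht, hf, hconf, -⟩ := hdec X
      refine ⟨f, d, hf, ⟨t, ε, hconf⟩, ?_⟩
      intro W hW g
      exact S.is_cokernel hconf g (hW t ht (ε ≫ g))
    · ext X
      constructor
      · intro hX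
        obtain ⟨t, f, ε, d, ht, hf, hconf, -⟩ := hdec X
        have hd : d = 0 := hX f hf d
        obtain ⟨g, h1, h2⟩ := S.iso_of_d_zero hconf hd
        exact hIso (Iso.mk ε g h1 h2) ht
      · intro ht f' hf' g
        exact hf' X ht g
    · intro t X d hepi ht
      obtain ⟨t', f, ε, δ, ht', hf, hconf, -⟩ := hdec X
      have hz : d ≫ δ = 0 := hf t ht (d ≫ δ)
      have hδ : δ = 0 := by rw [← cancel_epi d, hz, Limits.comp_zero]
      obtain ⟨g, h1, h2⟩ := S.iso_of_d_zero hconf hδ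
      exact hIso (Iso.mk ε g h1 h2) ht'
    · intro X f m hm hf t ht g
      have hz : g ≫ m = 0 := hf t ht (g ≫ m)
      rw [← cancel_mono m, hz, Limits.zero_comp]
  · intro F hIso hF
    have hdec := wla_decomp hIso hF
    refine ⟨⟨?_, ?_⟩, ?_⟩
    · intro X Y Z i d hconf hX hZ s hs g
      have hz : i ≫ g = 0 := hX s hs (i ≫ g)
      obtain ⟨h, hh, -⟩ := S.is_cokernel hconf g hz
      rw [← hh, hZ s hs h, Limits.comp_zero]
    · intro X
      obtain ⟨t, f, i, η, ht, hf, hconf, -⟩ := hdec X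
      refine ⟨t, i, ht, ⟨f, η, hconf⟩, ?_⟩
      intro W hW g
      exact S.is_kernel hconf g (hW f hf (g ≫ η))
    · ext X
      constructor
      · intro hX
        obtain ⟨t, f, i, η, ht, hf, hconf, -⟩ := hdec X
        have hi : i = 0 := hX t ht i
        obtain ⟨g, h1, h2⟩ := S.iso_of_i_zero hconf hi
        exact hIso (Iso.mk g η h2 h1) hf
      · intro hX t ht g
        exact ht X hX g


end ExactCatPaper
end

section
/- (Quillen's obscure axiom) Let d : X → Y be a morphism in an exact category E which admits a kernel. If there exists a morphism φ : X' → X such that the composite d ∘ φ is a deflation, then d is itself a deflation. -/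
open CategoryTheory CategoryTheory.Limits ZeroObject

universe v u

namespace ExactCatPaper

variable (E : Type u) [Category.{v} E] [Preadditive E] [HasZeroObject E]

variable {E}

section ObscureAux

variable {S : ExactStructure E}

/-- The deflation of a conflation is an epimorphism. -/
lemma conf_epi {A B Z : E} {i : A ⟶ B} {p : B ⟶ Z} (h : S.conf i p) :
    ∀ {T : E} (u v : Z ⟶ T), p ≫ u = p ≫ v → u = v := by
  intro T u v huv
  obtain ⟨w, hw, huniq⟩ := S.is_cokernel h (p ≫ u)
    (by rw [← Category.assoc, S.comp_zero h, zero_comp])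
  exact (huniq u rfl).trans (huniq v huv.symm).symm

/-- If `(i, p)` is a conflation and `q` is another cokernel of `i`, then `(i, q)` is a
conflation. -/
lemma conf_transfer {A B Z C : E} {i : A ⟶ B} {p : B ⟶ Z} (h : S.conf i p) (q : B ⟶ C)
    (hq0 : i ≫ q = 0)
    (hq : ∀ {T : E} (t : B ⟶ T), i ≫ t = 0 → ∃! u : C ⟶ T, q ≫ u = t) :
    S.conf i q := by
  obtain ⟨ζ, hζ, -⟩ := S.is_cokernel h q hq0
  obtain ⟨u, hu, -⟩ := hq p (S.comp_zero h)
  have hqepi : ∀ {T : E} (a b : C ⟶ T), q ≫ a = q ≫ b → a = b := by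
    intro T a b hab
    obtain ⟨w, hw, huniq⟩ := hq (q ≫ a) (by rw [← Category.assoc, hq0, zero_comp])
    exact (huniq a rfl).trans (huniq b hab.symm).symm
  have h1 : ζ ≫ u = 𝟙 Z := by
    refine conf_epi h _ _ ?_
    rw [← Category.assoc, hζ, hu, Category.comp_id]
  have h2 : u ≫ ζ = 𝟙 C := by
    refine hqepi _ _ ?_
    rw [← Category.assoc, hu, hζ, Category.comp_id]
  have := S.conf_iso (Iso.refl A) (Iso.refl B) (Iso.mk ζ u h1 h2) h
  simpa [hζ] using this

/-- Transport a conflation along an isomorphism of the middle object. -/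
lemma conf_middle {A B Z B' : E} {i : A ⟶ B} {p : B ⟶ Z} (h : S.conf i p) (e : B ≅ B') :
    S.conf (i ≫ e.hom) (e.inv ≫ p) := by
  have := S.conf_iso (Iso.refl A) e (Iso.refl Z) h
  simpa using this

end ObscureAux

/-- **Quillen's obscure axiom.** Let `d : X ⟶ Y` be a morphism in an exact
category which admits a kernel. If there exists `φ : X' ⟶ X` such that `φ ≫ d` is a
deflation, then `d` is a deflation. -/
theorem obscure_axiom
    (S : ExactStructure E) {X Y : E} (d : X ⟶ Y)
    (hker : ∃ (K : E) (k : K ⟶ X), k ≫ d = 0 ∧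
      ∀ {W : E} (f : W ⟶ X), f ≫ d = 0 → ∃! g : W ⟶ K, g ≫ k = f)
    (hφ : ∃ (X' : E) (φ : X' ⟶ X), S.IsDeflation (φ ≫ d)) :
    S.IsDeflation d := by
  obtain ⟨K, k, hk0, hkuniv⟩ := hker
  obtain ⟨X', φ, N, n, hn⟩ := hφ
  -- `k` is a monomorphism
  have hkmono : ∀ {T : E} (a b : T ⟶ K), a ≫ k = b ≫ k → a = b := by
    intro T a b hab
    obtain ⟨w, hw, huniq⟩ := hkuniv (b ≫ k) (by rw [Category.assoc, hk0, comp_zero])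
    exact (huniq a hab).trans (huniq b rfl).symm
  -- Build the biproduct `X' ⊞ K` via the pushout axiom, obtaining that `biprod.inr`
  -- is an inflation.
  obtain ⟨P, jK, gA, hPO, ZJ, dJ, hconfJ⟩ :=
    S.pushout_infl (0 : (0 : E) ⟶ X') (0 : (0 : E) ⟶ K) ⟨X', 𝟙 X', S.conf_id X'⟩
  have hzz : ∀ {T : E} (f : X' ⟶ T) (g : K ⟶ T),
      (0 : (0 : E) ⟶ X') ≫ f = (0 : (0 : E) ⟶ K) ≫ g := by
    intro T f g; rw [zero_comp, zero_comp]
  have hcolim : IsColimit (BinaryCofan.mk gA jK) := by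
    refine BinaryCofan.IsColimit.mk _ (fun f g => hPO.desc f g (hzz f g))
      (fun f g => hPO.inl_desc _ _ _) (fun f g => hPO.inr_desc _ _ _) ?_
    intro T f g m h₁ h₂
    refine hPO.hom_ext ?_ ?_
    · show gA ≫ m = gA ≫ hPO.desc f g (hzz f g)
      rw [hPO.inl_desc]; exact h₁
    · show jK ≫ m = jK ≫ hPO.desc f g (hzz f g)
      rw [hPO.inr_desc]; exact h₂
  haveI : HasBinaryCoproduct X' K := HasColimit.mk ⟨_, hcolim⟩
  haveI : HasBinaryBiproduct X' K := HasBinaryBiproduct.of_hasBinaryCoproduct X' K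
  -- identify `P` with the biproduct
  let τ : P ≅ X' ⊞ K := hPO.isoIsPushout _ _ (IsPushout.of_has_biproduct X' K)
  have hjKτ : jK ≫ τ.hom = biprod.inr := hPO.inr_isoIsPushout_hom _ _ (IsPushout.of_has_biproduct X' K)
  have hconfInr : S.conf (biprod.inr : K ⟶ X' ⊞ K) (τ.inv ≫ dJ) := by
    have := conf_middle hconfJ τ
    rwa [hjKτ] at this
  -- `biprod.fst` is a deflation with kernel `biprod.inr`
  have hfstconf : S.conf (biprod.inr : K ⟶ X' ⊞ K) (biprod.fst : X' ⊞ K ⟶ X') := by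
    refine conf_transfer hconfInr biprod.fst (by simp) ?_
    intro T t ht
    refine ⟨biprod.inl ≫ t, ?_, ?_⟩
    · show biprod.fst ≫ biprod.inl ≫ t = t
      have htot := biprod.total (X := X') (Y := K)
      have h' : (biprod.fst : X' ⊞ K ⟶ X') ≫ biprod.inl =
          𝟙 (X' ⊞ K) - biprod.snd ≫ biprod.inr := by
        rw [eq_sub_iff_add_eq, htot]
      rw [← Category.assoc, h', Preadditive.sub_comp, Category.id_comp,
        Category.assoc, ht, comp_zero, sub_zero]
    · intro y hy
      rw [← hy, ← Category.assoc, biprod.inl_fst, Category.id_comp]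
  -- the deflation `D = fst ≫ (φ ≫ d)` with kernel `n₂`
  obtain ⟨N₂, n₂, hn₂⟩ := S.defl_comp ⟨K, biprod.inr, hfstconf⟩ ⟨N, n, hn⟩
  -- the morphism `h = [φ, k] : X' ⊞ K ⟶ X`
  set h : X' ⊞ K ⟶ X := biprod.desc φ k with hhdef
  have hhd : h ≫ d = biprod.fst ≫ (φ ≫ d) := by
    apply biprod.hom_ext' <;> simp [hhdef, hk0]
  -- the square `(fst, h; φ ≫ d, d)` is a pullback
  have hcomm : (biprod.fst : X' ⊞ K ⟶ X') ≫ (φ ≫ d) = h ≫ d := hhd.symm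
  have hlim : IsLimit (PullbackCone.mk _ _ hcomm) := by
    refine PullbackCone.IsLimit.mk hcomm
      (fun s => biprod.lift s.fst ((hkuniv (s.snd - s.fst ≫ φ)
        (by rw [Preadditive.sub_comp, Category.assoc, s.condition, sub_self])).exists.choose))
      (fun s => by simp) ?_ ?_
    · intro s
      have hch := (hkuniv (s.snd - s.fst ≫ φ)
        (by rw [Preadditive.sub_comp, Category.assoc, s.condition, sub_self])).exists.choose_spec
      have : h = biprod.fst ≫ φ + biprod.snd ≫ k := by
        apply biprod.hom_ext' <;> simp [hhdef]
      rw [this, Preadditive.comp_add, ← Category.assoc, ← Category.assoc _ biprod.snd k, biprod.lift_fst,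
        biprod.lift_snd, hch]
      abel
    · intro s m h₁ h₂
      have hch := (hkuniv (s.snd - s.fst ≫ φ)
        (by rw [Preadditive.sub_comp, Category.assoc, s.condition, sub_self])).exists.choose_spec
      apply biprod.hom_ext
      · simpa using h₁
      · rw [biprod.lift_snd]
        refine hkmono _ _ ?_
        rw [Category.assoc, hch]
        have hh : h = biprod.fst ≫ φ + biprod.snd ≫ k := by
          apply biprod.hom_ext' <;> simp [hhdef]
        have h₁' : m ≫ biprod.fst = s.fst := by simpa using h₁
        have h₂' : m ≫ h = s.snd := h₂
        rw [hh, Preadditive.comp_add, ← Category.assoc, ← Category.assoc, h₁'] at h₂'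
        rw [← Category.assoc, eq_sub_iff_add_eq, add_comm]
        exact h₂'
  have hPB : IsPullback (biprod.fst : X' ⊞ K ⟶ X') h (φ ≫ d) d :=
    IsPullback.of_isLimit hlim
  -- compare with the pullback provided by the axiom: `h` is a deflation
  obtain ⟨P₀, p₁, p₂, hPB₀, M, m, hm⟩ := S.pullback_defl (φ ≫ d) d ⟨N, n, hn⟩
  let σ : (X' ⊞ K) ≅ P₀ := hPB.isoIsPullback _ _ hPB₀
  have hσp₂ : σ.hom ≫ p₂ = h := hPB.isoIsPullback_hom_snd _ _ hPB₀
  have hconfh : S.conf (m ≫ σ.inv) h := by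
    have := conf_middle hm σ.symm
    simpa [hσp₂] using this
  set m' : M ⟶ X' ⊞ K := m ≫ σ.inv with hm'def
  -- `h` is an epimorphism
  have hhepi : ∀ {T : E} (u v : X ⟶ T), h ≫ u = h ≫ v → u = v := conf_epi hconfh
  -- `m'` factors through `n₂`
  have hm'h : m' ≫ h = 0 := S.comp_zero hconfh
  have hm'D : m' ≫ (biprod.fst ≫ (φ ≫ d)) = 0 := by
    rw [← hhd, ← Category.assoc, hm'h, zero_comp]
  obtain ⟨μ, hμ, -⟩ := S.is_kernel hn₂ m' hm'D
  -- the comparison `q : N₂ ⟶ K`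
  have hn₂hd : (n₂ ≫ h) ≫ d = 0 := by
    rw [Category.assoc, hhd, S.comp_zero hn₂]
  obtain ⟨q, hq, -⟩ := hkuniv (n₂ ≫ h) hn₂hd
  have hμq : μ ≫ q = 0 := by
    refine hkmono _ _ ?_
    rw [Category.assoc, hq, ← Category.assoc, hμ, hm'h, zero_comp]
  -- push out the inflation `n₂` along `q`
  obtain ⟨P', jK', g₂, hPO', Z', dP', hconfP'⟩ := S.pushout_infl n₂ q ⟨Y, _, hn₂⟩
  -- the comparison map `β : P' ⟶ X` and its inverse `γ`
  have hdescw : n₂ ≫ h = q ≫ k := hq.symm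
  set β : P' ⟶ X := hPO'.desc h k hdescw with hβdef
  have hmg₂ : m' ≫ g₂ = 0 := by
    rw [← hμ, Category.assoc, hPO'.w, ← Category.assoc, hμq, zero_comp]
  obtain ⟨γ, hγ, -⟩ := S.is_cokernel hconfh g₂ hmg₂
  -- `biprod.inr` factors through `n₂` via `r`
  have hinrD : (biprod.inr : K ⟶ X' ⊞ K) ≫ (biprod.fst ≫ (φ ≫ d)) = 0 := by
    rw [← Category.assoc, biprod.inr_fst, zero_comp]
  obtain ⟨r, hr, -⟩ := S.is_kernel hn₂ biprod.inr hinrD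
  have hinrh : (biprod.inr : K ⟶ X' ⊞ K) ≫ h = k := biprod.inr_desc _ _
  have hrq : r ≫ q = 𝟙 K := by
    refine hkmono _ _ ?_
    rw [Category.assoc, hq, ← Category.assoc, hr, hinrh, Category.id_comp]
  have hinrg₂ : (biprod.inr : K ⟶ X' ⊞ K) ≫ g₂ = jK' := by
    rw [← hr, Category.assoc, hPO'.w, ← Category.assoc, hrq, Category.id_comp]
  have hkγ : k ≫ γ = jK' := by
    rw [← hinrh, Category.assoc, hγ, hinrg₂]
  have hg₂β : g₂ ≫ β = h := hPO'.inl_desc _ _ _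
  have hjK'β : jK' ≫ β = k := hPO'.inr_desc _ _ _
  have hβγ : β ≫ γ = 𝟙 P' := by
    refine hPO'.hom_ext ?_ ?_
    · rw [← Category.assoc, hg₂β, hγ, Category.comp_id]
    · rw [← Category.assoc, hjK'β, hkγ, Category.comp_id]
  have hγβ : γ ≫ β = 𝟙 X := by
    refine hhepi _ _ ?_
    rw [← Category.assoc, hγ, hg₂β, Category.comp_id]
  set ω : P' ≅ X := Iso.mk β γ hβγ hγβ with hωdef
  have hconfk : S.conf k (ω.inv ≫ dP') := by
    have := conf_middle hconfP' ω
    rwa [show jK' ≫ ω.hom = k from hjK'β] at this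
  -- finally, `d` is a cokernel of `k`, so `(k, d)` is a conflation
  refine ⟨K, k, conf_transfer hconfk d hk0 ?_⟩
  intro T t ht
  have h1 : n₂ ≫ (h ≫ t) = 0 := by
    rw [← Category.assoc, ← hq, Category.assoc, ht, comp_zero]
  obtain ⟨u, hu, huuniq⟩ := S.is_cokernel hn₂ (h ≫ t) h1
  refine ⟨u, ?_, ?_⟩
  · refine hhepi _ _ ?_
    rw [← Category.assoc, hhd]
    exact hu
  · intro v hv
    refine huuniq v ?_
    show (biprod.fst ≫ φ ≫ d) ≫ v = h ≫ t
    rw [← hhd, Category.assoc, hv]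

end ExactCatPaper
end

section
/- Consider a commutative diagram in an exact category E whose two rows B' → B → B'' and C' → C → C'' are conflations, with vertical morphisms g' : B' → C', g : B → C, g'' : B'' → C''. If g' and g'' are deflations, then g is a deflation. -/
open CategoryTheory CategoryTheory.Limits ZeroObject

universe v u

namespace ExactCatPaper

variable (E : Type u) [Category.{v} E] [Preadditive E] [HasZeroObject E]

variable {E}

-- aux lemmas to insert before the theorem
namespace ExactStructure

variable (S : ExactStructure E)

theorem mono_of_conf {X Y Z : E} {i : X ⟶ Y} {d : Y ⟶ Z} (h : S.conf i d) : Mono i := by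
  constructor
  intro T u v huv
  have h0 : u ≫ i ≫ d = 0 := by rw [S.comp_zero h, Limits.comp_zero]
  obtain ⟨w, hw, hwu⟩ := S.is_kernel h (u ≫ i) (by simpa using h0)
  rw [hwu u rfl, hwu v huv.symm]

theorem epi_of_conf {X Y Z : E} {i : X ⟶ Y} {d : Y ⟶ Z} (h : S.conf i d) : Epi d := by
  constructor
  intro T u v huv
  have h0 : i ≫ d ≫ u = 0 := by rw [← Category.assoc, S.comp_zero h, zero_comp]
  obtain ⟨w, hw, hwu⟩ := S.is_cokernel h (d ≫ u) (by simpa using h0)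
  rw [hwu u rfl, hwu v huv.symm]

theorem conf_iso_mid {X Y Y' Z : E} (e : Y ≅ Y') {i : X ⟶ Y} {d : Y ⟶ Z} (h : S.conf i d) :
    S.conf (i ≫ e.hom) (e.inv ≫ d) := by
  simpa using S.conf_iso (Iso.refl _) e (Iso.refl _) h

theorem conf_iso_tgt {X Y Z Z' : E} (e : Z ≅ Z') {i : X ⟶ Y} {d : Y ⟶ Z} (h : S.conf i d) :
    S.conf i (d ≫ e.hom) := by
  simpa using S.conf_iso (Iso.refl _) (Iso.refl _) e h

theorem conf_iso_src {X X' Y Z : E} (e : X ≅ X') {i : X ⟶ Y} {d : Y ⟶ Z} (h : S.conf i d) :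
    S.conf (e.inv ≫ i) d := by
  simpa using S.conf_iso e (Iso.refl _) (Iso.refl _) h

theorem defl_precomp_iso {Y' Y Z : E} (e : Y' ≅ Y) {d : Y ⟶ Z} (h : S.IsDeflation d) :
    S.IsDeflation (e.hom ≫ d) := by
  obtain ⟨A, i, hc⟩ := h
  exact ⟨A, i ≫ e.inv, by simpa using S.conf_iso_mid e.symm hc⟩

theorem defl_postcomp_iso {Y Z Z' : E} (e : Z ≅ Z') {d : Y ⟶ Z} (h : S.IsDeflation d) :
    S.IsDeflation (d ≫ e.hom) := by
  obtain ⟨A, i, hc⟩ := h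
  exact ⟨A, i, S.conf_iso_tgt e hc⟩

/-- Transfer a conflation along another cokernel of the same inflation. -/
theorem conf_coker_transfer {X Y Z Z' : E} {i : X ⟶ Y} {d : Y ⟶ Z} (h : S.conf i d)
    {d' : Y ⟶ Z'} (h0 : i ≫ d' = 0)
    (huniv : ∀ (W : E) (u : Y ⟶ W), i ≫ u = 0 → ∃! v : Z' ⟶ W, d' ≫ v = u) :
    S.conf i d' := by
  obtain ⟨γ, hγ, -⟩ := S.is_cokernel h d' h0
  obtain ⟨γ', hγ', -⟩ := huniv Z d (S.comp_zero h)
  obtain ⟨u₁, hu₁, hu₁u⟩ := S.is_cokernel h d (S.comp_zero h)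
  obtain ⟨u₂, hu₂, hu₂u⟩ := huniv Z' d' h0
  have hgg : γ ≫ γ' = 𝟙 Z := by
    rw [hu₁u (γ ≫ γ') (show d ≫ (γ ≫ γ') = d by rw [← Category.assoc, hγ, hγ']),
      hu₁u (𝟙 Z) (show d ≫ 𝟙 Z = d from Category.comp_id d)]
  have hgg' : γ' ≫ γ = 𝟙 Z' := by
    rw [hu₂u (γ' ≫ γ) (show d' ≫ (γ' ≫ γ) = d' by rw [← Category.assoc, hγ', hγ]),
      hu₂u (𝟙 Z') (show d' ≫ 𝟙 Z' = d' from Category.comp_id d')]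
  have := S.conf_iso_tgt (⟨γ, γ', hgg, hgg'⟩ : Z ≅ Z') h
  simpa [hγ] using this

/-- Transfer a conflation along another kernel of the same deflation. -/
theorem conf_ker_transfer {X X' Y Z : E} {i : X ⟶ Y} {d : Y ⟶ Z} (h : S.conf i d)
    {i' : X' ⟶ Y} (h0 : i' ≫ d = 0)
    (huniv : ∀ (W : E) (w : W ⟶ Y), w ≫ d = 0 → ∃! v : W ⟶ X', v ≫ i' = w) :
    S.conf i' d := by
  obtain ⟨γ, hγ, -⟩ := huniv X i (S.comp_zero h)
  obtain ⟨γ', hγ', -⟩ := S.is_kernel h i' h0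
  obtain ⟨u₁, hu₁, hu₁u⟩ := S.is_kernel h i (S.comp_zero h)
  obtain ⟨u₂, hu₂, hu₂u⟩ := huniv X' i' h0
  have hgg : γ ≫ γ' = 𝟙 X := by
    rw [hu₁u (γ ≫ γ') (show (γ ≫ γ') ≫ i = i by rw [Category.assoc, hγ', hγ]),
      hu₁u (𝟙 X) (show 𝟙 X ≫ i = i from Category.id_comp i)]
  have hgg' : γ' ≫ γ = 𝟙 X' := by
    rw [hu₂u (γ' ≫ γ) (show (γ' ≫ γ) ≫ i' = i' by rw [Category.assoc, hγ, hγ']),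
      hu₂u (𝟙 X') (show 𝟙 X' ≫ i' = i' from Category.id_comp i')]
  have := S.conf_iso_src (⟨γ, γ', hgg, hgg'⟩ : X ≅ X') h
  simpa [hγ'] using this

theorem hasBinaryBiproducts (S : ExactStructure E) : HasBinaryBiproducts E := by
  have hco : ∀ X Y : E, HasColimit (pair X Y) := by
    intro X Y
    obtain ⟨P, j, g, hpo, -⟩ :=
      S.pushout_infl (0 : (0 : E) ⟶ X) (0 : (0 : E) ⟶ Y) ⟨X, 𝟙 X, S.conf_id X⟩
    refine HasColimit.mk ⟨BinaryCofan.mk g j, BinaryCofan.isColimitMk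
      (fun s => hpo.desc s.inl s.inr (zero_comp.trans zero_comp.symm)) (fun s => hpo.inl_desc _ _ _)
      (fun s => hpo.inr_desc _ _ _) (fun s m h1 h2 => ?_)⟩
    exact hpo.hom_ext (by simpa using h1.trans (hpo.inl_desc s.inl s.inr (zero_comp.trans zero_comp.symm)).symm)
      (by simpa using h2.trans (hpo.inr_desc s.inl s.inr (zero_comp.trans zero_comp.symm)).symm)
  haveI : ∀ {X Y : E}, HasColimit (pair X Y) := fun {X Y} => hco X Y
  haveI := hasBinaryCoproducts_of_hasColimit_pair E
  exact HasBinaryBiproducts.of_hasBinaryCoproducts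

theorem isPushout_biprod [HasBinaryBiproducts E] (X Y : E) :
    IsPushout (0 : (0 : E) ⟶ X) (0 : (0 : E) ⟶ Y)
      (biprod.inl : X ⟶ X ⊞ Y) (biprod.inr : Y ⟶ X ⊞ Y) := by
  refine IsPushout.of_isColimit (PushoutCocone.IsColimit.mk (by simp)
    (fun s => biprod.desc s.inl s.inr) (fun s => by simp) (fun s => by simp)
    (fun s m h1 h2 => ?_))
  apply biprod.hom_ext' <;> simpa

/-- Split conflations are conflations. -/
theorem conf_inr_fst (S : ExactStructure E) [HasBinaryBiproducts E] (X Y : E) :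
    S.conf (biprod.inr : Y ⟶ X ⊞ Y) (biprod.fst : X ⊞ Y ⟶ X) := by
  obtain ⟨P, j, g, hpo, Z, dP, hconf⟩ :=
    S.pushout_infl (0 : (0 : E) ⟶ X) (0 : (0 : E) ⟶ Y) ⟨X, 𝟙 X, S.conf_id X⟩
  have h1 := S.conf_iso_mid (hpo.isoIsPushout _ _ (isPushout_biprod X Y)) hconf
  rw [IsPushout.inr_isoIsPushout_hom] at h1
  refine S.conf_coker_transfer h1 (by simp) ?_
  intro W u hu
  refine ⟨biprod.inl ≫ u, ?_, ?_⟩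
  · have htot := biprod.total (X := X) (Y := Y)
    calc biprod.fst ≫ biprod.inl ≫ u
        = (biprod.fst ≫ biprod.inl + biprod.snd ≫ biprod.inr) ≫ u := by
          rw [Preadditive.add_comp]
          simp [hu]
      _ = u := by rw [htot, Category.id_comp]
  · intro v hv
    have hv' : biprod.fst ≫ v = u := hv
    calc v = biprod.inl ≫ biprod.fst ≫ v := by simp
      _ = biprod.inl ≫ u := by rw [hv']

/-- Both projections of a pullback of deflations are deflations. -/
theorem pullback_defl_both (S : ExactStructure E) {Y Z W : E} {d : Y ⟶ Z} {f : W ⟶ Z}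
    (hd : S.IsDeflation d) (hf : S.IsDeflation f) :
    ∃ (P : E) (p₁ : P ⟶ Y) (p₂ : P ⟶ W), IsPullback p₁ p₂ d f ∧
      S.IsDeflation p₁ ∧ S.IsDeflation p₂ := by
  obtain ⟨P, p₁, p₂, hpb, hp₂⟩ := S.pullback_defl d f hd
  obtain ⟨Q, q₁, q₂, hqb, hq₂⟩ := S.pullback_defl f d hf
  refine ⟨P, p₁, p₂, hpb, ?_, hp₂⟩
  have := S.defl_precomp_iso (hpb.isoIsPullback _ _ hqb.flip) hq₂
  rwa [IsPullback.isoIsPullback_hom_fst] at this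

/-- `𝟙 B ⊞ a` is a deflation whenever `a` is. -/
theorem defl_biprod_map (S : ExactStructure E) [HasBinaryBiproducts E] {A A' : E} (B : E)
    {a : A ⟶ A'} (ha : S.IsDeflation a) : S.IsDeflation (biprod.map (𝟙 B) a) := by
  obtain ⟨P, p₁, p₂, hpb, hp₂⟩ := S.pullback_defl a (biprod.snd : B ⊞ A' ⟶ A') ha
  have w : (biprod.snd : B ⊞ A ⟶ A) ≫ a = biprod.map (𝟙 B) a ≫ biprod.snd := by simp
  have hlim := PullbackCone.IsLimit.mk w
    (fun s => biprod.lift (s.snd ≫ biprod.fst) s.fst)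
    (fun s => by simp)
    (fun s => by
      apply biprod.hom_ext
      · simp
      · simpa using s.condition)
    (fun s m h1 h2 => by
      apply biprod.hom_ext
      · have := congrArg (fun z => z ≫ (biprod.fst : B ⊞ A' ⟶ B)) h2
        simpa using this
      · simpa using h1)
  have hmy : IsPullback (biprod.snd : B ⊞ A ⟶ A) (biprod.map (𝟙 B) a) a
      (biprod.snd : B ⊞ A' ⟶ A') := IsPullback.of_isLimit hlim
  have := S.defl_precomp_iso (hmy.isoIsPullback _ _ hpb) hp₂
  rwa [IsPullback.isoIsPullback_hom_snd] at this

/-- Key lemma: a morphism of conflations with the same cokernel object whose induced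
map on kernels is a deflation is itself a deflation. -/
theorem middle_defl_aux (S : ExactStructure E) {K A B C A' B' : E}
    {i : A ⟶ B} {p : B ⟶ C} {i' : A' ⟶ B'} {p' : B' ⟶ C} {f : B ⟶ B'} {a : A ⟶ A'}
    {κ : K ⟶ A} (hc : S.conf i p) (hc' : S.conf i' p') (hfp : f ≫ p' = p)
    (hsq : i ≫ f = a ≫ i') (hκ : S.conf κ a) : S.IsDeflation f := by
  haveI := S.hasBinaryBiproducts
  have hmono_i : Mono i := S.mono_of_conf hc
  have hmono_i' : Mono i' := S.mono_of_conf hc'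
  have hmono_κ : Mono κ := S.mono_of_conf hκ
  set k' : K ⟶ B := κ ≫ i with hk'def
  have hk'f : k' ≫ f = 0 := by
    rw [hk'def, Category.assoc, hsq, ← Category.assoc, S.comp_zero hκ, Limits.zero_comp]
  -- k' is a kernel of f
  have hker : ∀ (T : E) (w : T ⟶ B), w ≫ f = 0 → ∃! v : T ⟶ K, v ≫ k' = w := by
    intro T w hw
    have hwp : w ≫ p = 0 := by rw [← hfp, ← Category.assoc, hw, Limits.zero_comp]
    obtain ⟨w₁, hw₁, hw₁u⟩ := S.is_kernel hc w hwp
    have hw₁a : w₁ ≫ a = 0 := by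
      have h2 : (w₁ ≫ a) ≫ i' = 0 ≫ i' := by
        rw [Category.assoc, ← hsq, ← Category.assoc, hw₁, hw, Limits.zero_comp]
      exact (cancel_mono i').mp h2
    obtain ⟨w₂, hw₂, hw₂u⟩ := S.is_kernel hκ w₁ hw₁a
    refine ⟨w₂, ?_, ?_⟩
    · show w₂ ≫ k' = w
      rw [hk'def, ← Category.assoc, hw₂, hw₁]
    · intro v hv
      have hv' : v ≫ k' = w := hv
      refine hw₂u v (hw₁u (v ≫ κ) ?_)
      show (v ≫ κ) ≫ i = w
      rw [Category.assoc, ← hk'def, hv']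
  -- the pullback Q of p' and p
  obtain ⟨Q, q₁, q₂, hqb, hq₁, hq₂⟩ := S.pullback_defl_both ⟨A', i', hc'⟩ ⟨A, i, hc⟩
  have hcond : f ≫ p' = 𝟙 B ≫ p := by rw [hfp, Category.id_comp]
  have hs₁ : (hqb.lift f (𝟙 B) hcond) ≫ q₁ = f := hqb.lift_fst f (𝟙 B) hcond
  have hs₂ : (hqb.lift f (𝟙 B) hcond) ≫ q₂ = 𝟙 B := hqb.lift_snd f (𝟙 B) hcond
  set s : B ⟶ Q := hqb.lift f (𝟙 B) hcond with hsdef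
  have hcond2 : i' ≫ p' = (0 : A' ⟶ B) ≫ p := by rw [S.comp_zero hc', Limits.zero_comp]
  have hι₁ : (hqb.lift i' 0 hcond2) ≫ q₁ = i' := hqb.lift_fst i' 0 hcond2
  have hι₂ : (hqb.lift i' 0 hcond2) ≫ q₂ = 0 := hqb.lift_snd i' 0 hcond2
  set ι : A' ⟶ Q := hqb.lift i' 0 hcond2 with hιdef
  -- ι is a kernel of q₂, hence a conflation
  obtain ⟨N, ιN, hN⟩ := hq₂
  have hconfι : S.conf ι q₂ := by
    refine S.conf_ker_transfer hN hι₂ ?_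
    intro T w hw
    have hwq : (w ≫ q₁) ≫ p' = 0 := by
      rw [Category.assoc, hqb.w, ← Category.assoc, hw, Limits.zero_comp]
    obtain ⟨v, hv, hvu⟩ := S.is_kernel hc' (w ≫ q₁) hwq
    refine ⟨v, ?_, ?_⟩
    · apply hqb.hom_ext
      · rw [Category.assoc, hι₁, hv]
      · rw [Category.assoc, hι₂, hw, Limits.comp_zero]
    · intro v' hv'
      have hv'' : v' ≫ ι = w := hv'
      exact hvu v' (show v' ≫ i' = w ≫ q₁ by rw [← hι₁, ← Category.assoc, hv''])
  have hmono_ι : Mono ι := S.mono_of_conf hconfι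
  -- a retraction of ι
  have h0 : (𝟙 Q - q₂ ≫ s) ≫ q₂ = 0 := by
    rw [Preadditive.sub_comp, Category.id_comp, Category.assoc, hs₂, Category.comp_id, sub_self]
  obtain ⟨ρQ, hρ0, -⟩ := S.is_kernel hconfι (𝟙 Q - q₂ ≫ s) h0
  have hρ : ρQ ≫ ι = 𝟙 Q - q₂ ≫ s := hρ0
  have hsρ : s ≫ ρQ = 0 := by
    have h2 : (s ≫ ρQ) ≫ ι = (0 : B ⟶ A') ≫ ι := by
      rw [Category.assoc, hρ, Preadditive.comp_sub, Category.comp_id, ← Category.assoc, hs₂,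
        Category.id_comp, sub_self, Limits.zero_comp]
    exact (cancel_mono ι).mp h2
  have hιρ : ι ≫ ρQ = 𝟙 A' := by
    have h2 : (ι ≫ ρQ) ≫ ι = 𝟙 A' ≫ ι := by
      rw [Category.assoc, hρ, Preadditive.comp_sub, Category.comp_id, ← Category.assoc, hι₂,
        Limits.zero_comp, sub_zero, Category.id_comp]
    exact (cancel_mono ι).mp h2
  -- the splitting iso B ⊞ A' ≅ Q
  let Θ : B ⊞ A' ≅ Q :=
    { hom := biprod.desc s ι
      inv := biprod.lift q₂ ρQ
      hom_inv_id := by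
        apply biprod.hom_ext'
        · apply biprod.hom_ext <;> simp [hs₂, hsρ]
        · apply biprod.hom_ext <;> simp [hι₂, hιρ]
      inv_hom_id := by
        rw [biprod.lift_desc, hρ]
        abel }
  -- [f, i'] is a deflation
  have hΘq : Θ.hom ≫ q₁ = biprod.desc f i' := by
    apply biprod.hom_ext' <;> simp [Θ, hs₁, hι₁]
  have hρdefl : S.IsDeflation (biprod.desc f i') := by
    have h3 := S.defl_precomp_iso Θ hq₁
    rwa [hΘq] at h3
  -- 𝟙 B ⊞ a is a deflation
  have hδ : S.IsDeflation (biprod.map (𝟙 B) a) := S.defl_biprod_map B ⟨K, κ, hκ⟩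
  -- an automorphism of B ⊞ A
  let Φ : B ⊞ A ≅ B ⊞ A :=
    { hom := 𝟙 _ + biprod.snd ≫ i ≫ biprod.inl
      inv := 𝟙 _ - biprod.snd ≫ i ≫ biprod.inl
      hom_inv_id := by
        simp [Preadditive.comp_add, Preadditive.add_comp, Preadditive.comp_sub,
          Preadditive.sub_comp]
      inv_hom_id := by
        simp [Preadditive.comp_add, Preadditive.add_comp, Preadditive.comp_sub,
          Preadditive.sub_comp] }
  have hkey : biprod.map (𝟙 B) a ≫ biprod.desc f i' = Φ.hom ≫ (biprod.fst ≫ f) := by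
    apply biprod.hom_ext'
    · simp [Φ, Preadditive.comp_add, Preadditive.add_comp]
    · simp [Φ, ← hsq, Preadditive.comp_add, Preadditive.add_comp]
  -- fst ≫ f is a deflation
  have hh : S.IsDeflation ((biprod.fst : B ⊞ A ⟶ B) ≫ f) := by
    have hcomp : S.IsDeflation (biprod.map (𝟙 B) a ≫ biprod.desc f i') :=
      S.defl_comp hδ hρdefl
    rw [hkey] at hcomp
    have h3 := S.defl_precomp_iso Φ.symm hcomp
    simpa using h3
  -- conflations with inflation  k' ⊞ 𝟙 A
  have hkerconf : ∀ {Z' : E} (φ : B ⟶ Z'), k' ≫ φ = 0 →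
      (∀ (T : E) (w : T ⟶ B), w ≫ φ = 0 → ∃! v : T ⟶ K, v ≫ k' = w) →
      S.IsDeflation ((biprod.fst : B ⊞ A ⟶ B) ≫ φ) →
      S.conf (biprod.map k' (𝟙 A)) ((biprod.fst : B ⊞ A ⟶ B) ≫ φ) := by
    intro Z' φ h0' hkφ hdφ
    obtain ⟨N', ιh, hconfN⟩ := hdφ
    refine S.conf_ker_transfer hconfN ?_ ?_
    · rw [← Category.assoc, biprod.map_fst, Category.assoc, h0', Limits.comp_zero]
    · intro T w hw
      obtain ⟨v, hv0, hvu⟩ := hkφ T (w ≫ biprod.fst) (by rw [Category.assoc]; exact hw)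
      have hv : v ≫ k' = w ≫ biprod.fst := hv0
      refine ⟨biprod.lift v (w ≫ biprod.snd), ?_, ?_⟩
      · apply biprod.hom_ext
        · simp [hv]
        · simp
      · intro u hu
        have hu' : u ≫ biprod.map k' (𝟙 A) = w := hu
        apply biprod.hom_ext
        · rw [biprod.lift_fst]
          refine hvu (u ≫ biprod.fst) ?_
          show (u ≫ biprod.fst) ≫ k' = w ≫ biprod.fst
          rw [Category.assoc, ← biprod.map_fst k' (𝟙 A), ← Category.assoc, hu']
        · rw [biprod.lift_snd]
          have h4 := congrArg (fun z => z ≫ (biprod.snd : B ⊞ A ⟶ A)) hu'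
          simpa using h4
  have hconff : S.conf (biprod.map k' (𝟙 A)) ((biprod.fst : B ⊞ A ⟶ B) ≫ f) := hkerconf f hk'f hker hh
  -- B is the pushout of (k' ⊞ 𝟙 A) along fst
  have hweq : biprod.map k' (𝟙 A) ≫ (biprod.fst : B ⊞ A ⟶ B) =
      (biprod.fst : K ⊞ A ⟶ K) ≫ k' := by simp
  have hBpo : IsPushout (biprod.map k' (𝟙 A)) (biprod.fst : K ⊞ A ⟶ K)
      (biprod.fst : B ⊞ A ⟶ B) k' := by
    refine IsPushout.of_isColimit (PushoutCocone.IsColimit.mk hweq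
      (fun sc => biprod.inl ≫ sc.inl) (fun sc => ?_) (fun sc => ?_) (fun sc m h1 h2 => ?_))
    · have hinr : (biprod.inr : A ⟶ B ⊞ A) ≫ sc.inl = 0 := by
        have h4 := congrArg (fun z => (biprod.inr : A ⟶ K ⊞ A) ≫ z) sc.condition
        simpa using h4
      calc biprod.fst ≫ biprod.inl ≫ sc.inl
          = (biprod.fst ≫ biprod.inl + biprod.snd ≫ biprod.inr) ≫ sc.inl := by
            rw [Preadditive.add_comp]
            simp [hinr]
        _ = sc.inl := by rw [biprod.total, Category.id_comp]
    · have h4 := congrArg (fun z => (biprod.inl : K ⟶ K ⊞ A) ≫ z) sc.condition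
      simpa using h4
    · have h1' : biprod.fst ≫ m = sc.inl := h1
      calc m = ((biprod.inl : B ⟶ B ⊞ A) ≫ biprod.fst) ≫ m := by
            rw [biprod.inl_fst, Category.id_comp]
        _ = biprod.inl ≫ sc.inl := by rw [Category.assoc, h1']
  -- push out the inflation along fst : K ⊞ A ⟶ K
  obtain ⟨P₁, j₁, g₁, hpo₁, Z₁, d₁, hconf₁⟩ :=
    S.pushout_infl (biprod.map k' (𝟙 A)) (biprod.fst : K ⊞ A ⟶ K) ⟨B', biprod.fst ≫ f, hconff⟩
  have h2 := S.conf_iso_mid (hpo₁.isoIsPushout _ _ hBpo) hconf₁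
  rw [IsPushout.inr_isoIsPushout_hom] at h2
  -- h2 : S.conf k' d₂  where  d₂ = ε.inv ≫ d₁
  set d₂ : B ⟶ Z₁ := (hpo₁.isoIsPushout _ _ hBpo).inv ≫ d₁ with hd₂def
  have hfd₂ : S.IsDeflation ((biprod.fst : B ⊞ A ⟶ B) ≫ d₂) :=
    S.defl_comp ⟨A, biprod.inr, S.conf_inr_fst B A⟩ ⟨K, k', h2⟩
  have hconfd : S.conf (biprod.map k' (𝟙 A)) ((biprod.fst : B ⊞ A ⟶ B) ≫ d₂) :=
    hkerconf d₂ (S.comp_zero h2) (fun T w hw => S.is_kernel h2 w hw) hfd₂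
  -- compare the two cokernels of k' ⊞ 𝟙 A
  obtain ⟨γ, hγ0, -⟩ := S.is_cokernel hconfd (biprod.fst ≫ f) (S.comp_zero hconff)
  obtain ⟨γ', hγ'0, -⟩ := S.is_cokernel hconff (biprod.fst ≫ d₂) (S.comp_zero hconfd)
  have hγ : ((biprod.fst : B ⊞ A ⟶ B) ≫ d₂) ≫ γ = (biprod.fst : B ⊞ A ⟶ B) ≫ f := hγ0
  have hγ' : ((biprod.fst : B ⊞ A ⟶ B) ≫ f) ≫ γ' = (biprod.fst : B ⊞ A ⟶ B) ≫ d₂ := hγ'0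
  obtain ⟨u₁, hu₁, hu₁u⟩ := S.is_cokernel hconfd (biprod.fst ≫ d₂) (S.comp_zero hconfd)
  obtain ⟨u₂, hu₂, hu₂u⟩ := S.is_cokernel hconff (biprod.fst ≫ f) (S.comp_zero hconff)
  have hgg : γ ≫ γ' = 𝟙 Z₁ := by
    rw [hu₁u (γ ≫ γ') (show ((biprod.fst : B ⊞ A ⟶ B) ≫ d₂) ≫ (γ ≫ γ') = (biprod.fst : B ⊞ A ⟶ B) ≫ d₂ by
        rw [← Category.assoc, hγ, hγ']),
      hu₁u (𝟙 Z₁) (Category.comp_id _)]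
  have hgg' : γ' ≫ γ = 𝟙 B' := by
    rw [hu₂u (γ' ≫ γ) (show ((biprod.fst : B ⊞ A ⟶ B) ≫ f) ≫ (γ' ≫ γ) = (biprod.fst : B ⊞ A ⟶ B) ≫ f by
        rw [← Category.assoc, hγ', hγ]),
      hu₂u (𝟙 B') (Category.comp_id _)]
  have hfin := S.conf_iso_tgt (⟨γ, γ', hgg, hgg'⟩ : Z₁ ≅ B') h2
  have hd₂γ : d₂ ≫ γ = f := by
    have h5 : (biprod.fst : B ⊞ A ⟶ B) ≫ d₂ ≫ γ = (biprod.fst : B ⊞ A ⟶ B) ≫ f := by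
      rw [← Category.assoc, hγ]
    have h6 := congrArg (fun z => (biprod.inl : B ⟶ B ⊞ A) ≫ z) h5
    simpa using h6
  rw [hd₂γ] at hfin
  exact ⟨K, k', hfin⟩

end ExactStructure


/-- Given a commutative diagram in an exact category whose rows
`B' → B → B''` and `C' → C → C''` are conflations, if the outer vertical morphisms
`g' : B' ⟶ C'` and `g'' : B'' ⟶ C''` are deflations, then so is the middle one
`g : B ⟶ C`. -/
theorem deflation_in_the_middle
    (S : ExactStructure E) {B' B B'' C' C C'' : E}
    (iB : B' ⟶ B) (dB : B ⟶ B'') (iC : C' ⟶ C) (dC : C ⟶ C'')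
    (g' : B' ⟶ C') (g : B ⟶ C) (g'' : B'' ⟶ C'')
    (hB : S.conf iB dB) (hC : S.conf iC dC)
    (hsq₁ : iB ≫ g = g' ≫ iC) (hsq₂ : dB ≫ g'' = g ≫ dC)
    (hg' : S.IsDeflation g') (hg'' : S.IsDeflation g'') :
    S.IsDeflation g := by
  obtain ⟨K, κ, hκ⟩ := hg'
  obtain ⟨P, p₁, p₂, hpb, hp₁, hp₂⟩ := S.pullback_defl_both ⟨C', iC, hC⟩ hg''
  have hcond : g ≫ dC = dB ≫ g'' := hsq₂.symm
  have ht₁ : (hpb.lift g dB hcond) ≫ p₁ = g := hpb.lift_fst g dB hcond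
  have ht₂ : (hpb.lift g dB hcond) ≫ p₂ = dB := hpb.lift_snd g dB hcond
  set t : B ⟶ P := hpb.lift g dB hcond with htdef
  have hcond2 : iC ≫ dC = (0 : C' ⟶ B'') ≫ g'' := by
    rw [S.comp_zero hC, Limits.zero_comp]
  have hj₁ : (hpb.lift iC 0 hcond2) ≫ p₁ = iC := hpb.lift_fst iC 0 hcond2
  have hj₂ : (hpb.lift iC 0 hcond2) ≫ p₂ = 0 := hpb.lift_snd iC 0 hcond2
  set j : C' ⟶ P := hpb.lift iC 0 hcond2 with hjdef
  obtain ⟨N, ιN, hN⟩ := hp₂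
  have hconfj : S.conf j p₂ := by
    refine S.conf_ker_transfer hN hj₂ ?_
    intro T w hw
    have hwq : (w ≫ p₁) ≫ dC = 0 := by
      rw [Category.assoc, hpb.w, ← Category.assoc, hw, Limits.zero_comp]
    obtain ⟨v, hv, hvu⟩ := S.is_kernel hC (w ≫ p₁) hwq
    refine ⟨v, ?_, ?_⟩
    · apply hpb.hom_ext
      · rw [Category.assoc, hj₁, hv]
      · rw [Category.assoc, hj₂, hw, Limits.comp_zero]
    · intro v' hv'
      have hv'' : v' ≫ j = w := hv'
      exact hvu v' (show v' ≫ iC = w ≫ p₁ by rw [← hj₁, ← Category.assoc, hv''])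
  have hsqt : iB ≫ t = g' ≫ j := by
    apply hpb.hom_ext
    · rw [Category.assoc, Category.assoc, ht₁, hj₁, hsq₁]
    · rw [Category.assoc, Category.assoc, ht₂, hj₂, S.comp_zero hB, Limits.comp_zero]
  have ht : S.IsDeflation t := S.middle_defl_aux hB hconfj ht₂ hsqt hκ
  have hgeq : g = t ≫ p₁ := ht₁.symm
  rw [hgeq]
  exact S.defl_comp ht hp₁

end ExactCatPaper
end

section
/- A weakly left admissible subcategory F of an exact category E is left admissible (i.e. additionally Ext¹(^{⊥₀}F, F) = 0, so the torsion pair (^{⊥₀}F, F) is perpendicular) if and only if the left adjoint δ^* : E → F of the inclusion is an exact functor. Dually, a weakly right admissible subcategory T is right admissible if and only if the right adjoint ι^! : E → T of the inclusion is exact. -/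
open CategoryTheory CategoryTheory.Limits ZeroObject

universe v u

namespace ExactCatPaper

variable (E : Type u) [Category.{v} E] [Preadditive E] [HasZeroObject E]

variable {E}

section Auxiliary

variable {S : ExactStructure E}

lemma conf_infl_mono {X Y Z : E} {i : X ⟶ Y} {d : Y ⟶ Z} (h : S.conf i d) : Mono i := by
  refine ⟨fun {V} f g hfg => ?_⟩
  have h0 : (f ≫ i) ≫ d = 0 := by rw [Category.assoc, S.comp_zero h, comp_zero]
  obtain ⟨u, -, huniq⟩ := S.is_kernel h (f ≫ i) h0
  rw [huniq f rfl, huniq g hfg.symm]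

lemma conf_defl_epi {X Y Z : E} {i : X ⟶ Y} {d : Y ⟶ Z} (h : S.conf i d) : Epi d := by
  refine ⟨fun {V} f g hfg => ?_⟩
  have h0 : i ≫ (d ≫ f) = 0 := by rw [← Category.assoc, S.comp_zero h, zero_comp]
  obtain ⟨u, -, huniq⟩ := S.is_cokernel h (d ≫ f) h0
  rw [huniq f rfl, huniq g hfg.symm]

/-- transport a conflation along an isomorphism of the middle object -/
lemma conf_iso_mid {X Y Z Y' : E} {i : X ⟶ Y} {d : Y ⟶ Z} (h : S.conf i d) (e : Y ≅ Y') :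
    S.conf (i ≫ e.hom) (e.inv ≫ d) := by
  have := S.conf_iso (Iso.refl X) e (Iso.refl Z) h
  simpa using this

/-- transport a conflation along an isomorphism of the cokernel object -/
lemma conf_iso_right {X Y Z Z' : E} {i : X ⟶ Y} {d : Y ⟶ Z} (h : S.conf i d) (e : Z ≅ Z') :
    S.conf i (d ≫ e.hom) := by
  have := S.conf_iso (Iso.refl X) (Iso.refl Y) e h
  simpa using this


lemma conf_iso_mid' {X Y Z Y' : E} {i : X ⟶ Y} {d : Y ⟶ Z} (h : S.conf i d)
    (φ : Y ⟶ Y') (ψ : Y' ⟶ Y) (h1 : φ ≫ ψ = 𝟙 Y) (h2 : ψ ≫ φ = 𝟙 Y') :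
    S.conf (i ≫ φ) (ψ ≫ d) :=
  conf_iso_mid h (Iso.mk φ ψ h1 h2)

lemma conf_iso_right' {X Y Z Z' : E} {i : X ⟶ Y} {d : Y ⟶ Z} (h : S.conf i d)
    (φ : Z ⟶ Z') (ψ : Z' ⟶ Z) (h1 : φ ≫ ψ = 𝟙 Z) (h2 : ψ ≫ φ = 𝟙 Z') :
    S.conf i (d ≫ φ) :=
  conf_iso_right h (Iso.mk φ ψ h1 h2)

lemma conf_iso_left {X Y Z X' : E} {i : X ⟶ Y} {d : Y ⟶ Z} (h : S.conf i d) (e : X ≅ X') :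
    S.conf (e.inv ≫ i) d := by
  have := S.conf_iso e (Iso.refl Y) (Iso.refl Z) h
  simpa using this

lemma conf_iso_left' {X Y Z X' : E} {i : X ⟶ Y} {d : Y ⟶ Z} (h : S.conf i d)
    (φ : X ⟶ X') (ψ : X' ⟶ X) (h1 : φ ≫ ψ = 𝟙 X) (h2 : ψ ≫ φ = 𝟙 X') :
    S.conf (ψ ≫ i) d :=
  conf_iso_left h (Iso.mk φ ψ h1 h2)

/-- if `m` satisfies the universal property of the kernel of a deflation `d`,
then `(m, d)` is a conflation -/
lemma conf_of_kernel {A Y Z B : E} {ι : A ⟶ Y} {d : Y ⟶ Z} (h : S.conf ι d)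
    (m : B ⟶ Y) (hm0 : m ≫ d = 0)
    (hker : ∀ {V : E} (f : V ⟶ Y), f ≫ d = 0 → ∃ g : V ⟶ B, g ≫ m = f)
    (hmono : Mono m) : S.conf m d := by
  obtain ⟨a, ha⟩ := hker ι (S.comp_zero h)
  obtain ⟨b, hb, -⟩ := S.is_kernel h m hm0
  have hι : Mono ι := conf_infl_mono h
  have hab : a ≫ b = 𝟙 A := by
    rw [← cancel_mono ι]
    rw [Category.assoc, hb, ha, Category.id_comp]
  have hba : b ≫ a = 𝟙 B := by
    rw [← cancel_mono m]
    rw [Category.assoc, ha, hb, Category.id_comp]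
  have := conf_iso_left' h a b hab hba
  rwa [hb] at this

/-- pushout of a conflation along an arbitrary morphism from the kernel -/
lemma pushoutConf {X Y Z W : E} {i : X ⟶ Y} {d : Y ⟶ Z} (h : S.conf i d) (f : X ⟶ W) :
    ∃ (P : E) (j : W ⟶ P) (g : Y ⟶ P) (e : P ⟶ Z),
      IsPushout i f g j ∧ S.conf j e ∧ g ≫ e = d := by
  obtain ⟨P, j, g, hpo, Z'', d'', h''⟩ := S.pushout_infl i f ⟨Z, d, h⟩
  have hw : i ≫ d = f ≫ (0 : W ⟶ Z) := by rw [S.comp_zero h, comp_zero]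
  refine ⟨P, j, g, hpo.desc d 0 hw, hpo, ?_, hpo.inl_desc d 0 hw⟩
  set e : P ⟶ Z := hpo.desc d 0 hw with he
  have hje : j ≫ e = 0 := hpo.inr_desc d 0 hw
  obtain ⟨ψ, hψ, -⟩ := S.is_cokernel h'' e hje
  have hgd'' : i ≫ (g ≫ d'') = 0 := by
    rw [← Category.assoc, hpo.w, Category.assoc, S.comp_zero h'', comp_zero]
  obtain ⟨χ, hχ, -⟩ := S.is_cokernel h (g ≫ d'') hgd''
  have hd''epi : Epi d'' := conf_defl_epi h''
  have hdepi : Epi d := conf_defl_epi h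
  have heχ : e ≫ χ = d'' := by
    apply hpo.hom_ext
    · rw [← Category.assoc, hpo.inl_desc, hχ]
    · rw [← Category.assoc, hje, zero_comp, S.comp_zero h'']
  have hψχ : ψ ≫ χ = 𝟙 Z'' := by
    rw [← cancel_epi d'', ← Category.assoc, hψ, heχ, Category.comp_id]
  have hχψ : χ ≫ ψ = 𝟙 Z := by
    rw [← cancel_epi d, ← Category.assoc, hχ, Category.assoc, hψ, Category.comp_id]
    exact hpo.inl_desc d 0 hw
  have := conf_iso_right' h'' ψ χ hψχ hχψ
  rwa [hψ] at this

/-- pullback of a conflation along an arbitrary morphism into the cokernel -/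
lemma pullbackConf {X Y Z W : E} {i : X ⟶ Y} {d : Y ⟶ Z} (h : S.conf i d) (f : W ⟶ Z) :
    ∃ (P : E) (p₁ : P ⟶ Y) (p₂ : P ⟶ W) (w : X ⟶ P),
      IsPullback p₁ p₂ d f ∧ S.conf w p₂ ∧ w ≫ p₁ = i := by
  obtain ⟨P, p₁, p₂, hpb, K, ι, hι⟩ := S.pullback_defl d f ⟨X, i, h⟩
  have hw0 : i ≫ d = (0 : X ⟶ W) ≫ f := by rw [S.comp_zero h, zero_comp]
  set w : X ⟶ P := hpb.lift i 0 hw0 with hwdef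
  have hw1 : w ≫ p₁ = i := hpb.lift_fst i 0 hw0
  have hw2 : w ≫ p₂ = 0 := hpb.lift_snd i 0 hw0
  refine ⟨P, p₁, p₂, w, hpb, ?_, hw1⟩
  have hmono : Mono w := by
    refine ⟨fun {V} a b hab => ?_⟩
    have hab2 : a ≫ i = b ≫ i := by
      rw [← hw1, ← Category.assoc, ← Category.assoc, hab]
    haveI := conf_infl_mono h
    exact (cancel_mono i).1 hab2
  refine conf_of_kernel hι w hw2 ?_ hmono
  intro V g hg
  have hgd : (g ≫ p₁) ≫ d = 0 := by
    rw [Category.assoc, hpb.w, ← Category.assoc, hg, zero_comp]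
  obtain ⟨a, ha, -⟩ := S.is_kernel h (g ≫ p₁) hgd
  refine ⟨a, hpb.hom_ext ?_ ?_⟩
  · rw [Category.assoc, hw1, ha]
  · rw [Category.assoc, hw2, comp_zero, hg]

/-- every map to a zero object together with the identity is a conflation -/
lemma confToZero (A : E) : S.conf (𝟙 A) (0 : A ⟶ (0 : E)) := by
  obtain ⟨P, j, g, hpo, Z₀, d₀, h₀⟩ :=
    S.pushout_infl (0 : (0 : E) ⟶ (0 : E)) (0 : (0 : E) ⟶ A) ⟨_, _, S.conf_id (0 : E)⟩
  have hw : (0 : (0:E) ⟶ (0:E)) ≫ (0 : (0:E) ⟶ A) = (0 : (0:E) ⟶ A) ≫ 𝟙 A := by simp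
  set k : P ⟶ A := hpo.desc 0 (𝟙 A) hw with hk
  have hjk : j ≫ k = 𝟙 A := hpo.inr_desc 0 (𝟙 A) hw
  have hkj : k ≫ j = 𝟙 P := by
    apply hpo.hom_ext
    · exact (isZero_zero E).eq_of_src _ _
    · rw [← Category.assoc, hjk, Category.id_comp, Category.comp_id]
  have hd₀ : d₀ = 0 := by
    have h1 : j ≫ d₀ = 0 := S.comp_zero h₀
    calc d₀ = (k ≫ j) ≫ d₀ := by rw [hkj, Category.id_comp]
    _ = k ≫ (j ≫ d₀) := Category.assoc _ _ _
    _ = 0 := by rw [h1, comp_zero]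
  have hZ₀ : 𝟙 Z₀ = 0 := by
    haveI := conf_defl_epi h₀
    have : d₀ ≫ 𝟙 Z₀ = d₀ ≫ 0 := by rw [Category.comp_id, comp_zero, hd₀]
    exact (cancel_epi d₀).1 this
  have c1 := conf_iso_mid' h₀ k j hkj hjk
  rw [hjk, S.comp_zero h₀] at c1
  have c2 := conf_iso_right' c1 (0 : Z₀ ⟶ (0 : E)) (0 : (0 : E) ⟶ Z₀)
      (by rw [comp_zero, hZ₀]) (by rw [comp_zero, id_zero])
  rwa [zero_comp] at c2


/-- A binary product datum. -/
structure BinProd (A B : E) where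
  P : E
  fst : P ⟶ A
  snd : P ⟶ B
  lift : ∀ {V : E}, (V ⟶ A) → (V ⟶ B) → (V ⟶ P)
  lift_fst : ∀ {V : E} (x : V ⟶ A) (y : V ⟶ B), lift x y ≫ fst = x
  lift_snd : ∀ {V : E} (x : V ⟶ A) (y : V ⟶ B), lift x y ≫ snd = y
  hom_ext : ∀ {V : E} (u v : V ⟶ P), u ≫ fst = v ≫ fst → u ≫ snd = v ≫ snd → u = v

lemma BinProd.lift_fst_assoc {A B : E} (b : BinProd A B) {V W : E}
    (x : V ⟶ A) (y : V ⟶ B) (g : A ⟶ W) : b.lift x y ≫ (b.fst ≫ g) = x ≫ g := by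
  rw [← Category.assoc, b.lift_fst]

lemma BinProd.lift_snd_assoc {A B : E} (b : BinProd A B) {V W : E}
    (x : V ⟶ A) (y : V ⟶ B) (g : B ⟶ W) : b.lift x y ≫ (b.snd ≫ g) = y ≫ g := by
  rw [← Category.assoc, b.lift_snd]

/-- swap the factors of a binary product -/
def BinProd.swap {A B : E} (b : BinProd A B) : BinProd B A where
  P := b.P
  fst := b.snd
  snd := b.fst
  lift x y := b.lift y x
  lift_fst x y := b.lift_snd y x
  lift_snd x y := b.lift_fst y x
  hom_ext u v h1 h2 := b.hom_ext u v h2 h1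

lemma exists_binProd (S : ExactStructure E) (A B : E) : Nonempty (BinProd A B) := by
  obtain ⟨P, p₁, p₂, hpb, -⟩ :=
    S.pullback_defl (0 : A ⟶ (0 : E)) (0 : B ⟶ (0 : E)) ⟨A, 𝟙 A, confToZero A⟩
  refine ⟨⟨P, p₁, p₂, fun {V} x y => hpb.lift x y (by simp), ?_, ?_, ?_⟩⟩
  · intro V x y; exact hpb.lift_fst x y (by simp)
  · intro V x y; exact hpb.lift_snd x y (by simp)
  · intro V u v h1 h2; exact hpb.hom_ext h1 h2

/-- `d × 𝟙` is a deflation. -/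
lemma defl_prod {K A Y : E} {p₀ : K ⟶ A} (h₀ : S.IsDeflation p₀)
    (B2 : BinProd K Y) (B3 : BinProd A Y) :
    S.IsDeflation (B3.lift (B2.fst ≫ p₀) B2.snd) := by
  obtain ⟨PB, β₁, β₂, hpb, Kst, ιst, hιst⟩ := S.pullback_defl p₀ B3.fst h₀
  set m : B2.P ⟶ B3.P := B3.lift (B2.fst ≫ p₀) B2.snd with hm
  have hmf : m ≫ B3.fst = B2.fst ≫ p₀ := B3.lift_fst _ _
  have hms : m ≫ B3.snd = B2.snd := B3.lift_snd _ _
  have hwθ : B2.fst ≫ p₀ = m ≫ B3.fst := hmf.symm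
  set θinv : B2.P ⟶ PB := hpb.lift B2.fst m hwθ with hθinv
  have hθinv1 : θinv ≫ β₁ = B2.fst := hpb.lift_fst _ _ _
  have hθinv2 : θinv ≫ β₂ = m := hpb.lift_snd _ _ _
  set θhom : PB ⟶ B2.P := B2.lift β₁ (β₂ ≫ B3.snd) with hθhom
  have hθhom1 : θhom ≫ B2.fst = β₁ := B2.lift_fst _ _
  have hθhom2 : θhom ≫ B2.snd = β₂ ≫ B3.snd := B2.lift_snd _ _
  have h1 : θhom ≫ θinv = 𝟙 PB := by
    apply hpb.hom_ext
    · rw [Category.assoc, hθinv1, Category.id_comp, hθhom1]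
    · rw [Category.assoc, hθinv2, Category.id_comp]
      apply B3.hom_ext
      · rw [Category.assoc, hmf, ← Category.assoc, hθhom1, hpb.w]
      · rw [Category.assoc, hms, hθhom2]
  have h2 : θinv ≫ θhom = 𝟙 B2.P := by
    apply B2.hom_ext
    · rw [Category.assoc, hθhom1, hθinv1, Category.id_comp]
    · rw [Category.assoc, hθhom2, ← Category.assoc, hθinv2, hms, Category.id_comp]
  have := conf_iso_mid' hιst θhom θinv h1 h2
  rw [hθinv2] at this
  exact ⟨_, _, this⟩

lemma unipotent_comp {P : E} (u : P ⟶ P) (h : u ≫ u = 0) :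
    (𝟙 P + u) ≫ (𝟙 P - u) = 𝟙 P := by
  simp only [Preadditive.add_comp, Preadditive.comp_sub, Preadditive.sub_comp,
    Preadditive.comp_add, Category.id_comp, Category.comp_id, h, sub_zero, add_zero]
  abel

lemma unipotent_comp' {P : E} (u : P ⟶ P) (h : u ≫ u = 0) :
    (𝟙 P - u) ≫ (𝟙 P + u) = 𝟙 P := by
  simp only [Preadditive.add_comp, Preadditive.comp_sub, Preadditive.sub_comp,
    Preadditive.comp_add, Category.id_comp, Category.comp_id, h, sub_zero, add_zero]
  abel

/-- The "obscure axiom": if `d` has a kernel `κ` and some `e ≫ d` is a deflation, then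
`(κ, d)` is a conflation. -/
lemma conf_of_ker_precomp {Y Z k W G₀ : E} {d : Y ⟶ Z} {κ : k ⟶ Y} (hκd : κ ≫ d = 0)
    (KP : ∀ {V : E} (g : V ⟶ Y), g ≫ d = 0 → ∃ x : V ⟶ k, x ≫ κ = g) (hκ : Mono κ)
    {e : W ⟶ Y} {μ₀ : G₀ ⟶ W} (hμ : S.conf μ₀ (e ≫ d)) : S.conf κ d := by
  have hμe : (μ₀ ≫ e) ≫ d = 0 := by rw [Category.assoc]; exact S.comp_zero hμ
  obtain ⟨γ, hγ⟩ := KP (μ₀ ≫ e) hμe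
  obtain ⟨V₂, jk, gW, eV, hpo, hcf, hge⟩ := pushoutConf hμ γ
  set θ : V₂ ⟶ Y := hpo.desc e κ hγ.symm with hθ
  have hθ1 : gW ≫ θ = e := hpo.inl_desc _ _ _
  have hθ2 : jk ≫ θ = κ := hpo.inr_desc _ _ _
  have hθd : θ ≫ d = eV := by
    apply hpo.hom_ext
    · rw [← Category.assoc, hθ1, hge]
    · rw [← Category.assoc, hθ2, hκd, S.comp_zero hcf]
  obtain ⟨P, p₁, p₂, hpb, F₀, ι, hι⟩ := S.pullback_defl (e ≫ d) d ⟨_, _, hμ⟩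
  have hsw : 𝟙 W ≫ (e ≫ d) = e ≫ d := by rw [Category.id_comp]
  set s : W ⟶ P := hpb.lift (𝟙 W) e hsw with hs
  have hs1 : s ≫ p₁ = 𝟙 W := hpb.lift_fst _ _ _
  have hs2 : s ≫ p₂ = e := hpb.lift_snd _ _ _
  have hlw : (0 : k ⟶ W) ≫ (e ≫ d) = κ ≫ d := by rw [zero_comp, hκd]
  set lam : k ⟶ P := hpb.lift 0 κ hlw with hlam
  have hlam1 : lam ≫ p₁ = 0 := hpb.lift_fst _ _ _
  have hlam2 : lam ≫ p₂ = κ := hpb.lift_snd _ _ _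
  have hsub : (p₂ - p₁ ≫ e) ≫ d = 0 := by
    rw [Preadditive.sub_comp, Category.assoc, ← hpb.w, sub_self]
  obtain ⟨ρ, hρ⟩ := KP (p₂ - p₁ ≫ e) hsub
  set ψ : P ⟶ V₂ := p₁ ≫ gW + ρ ≫ jk with hψ
  have hιp₂ : ι ≫ p₂ = 0 := S.comp_zero hι
  have hιp₁d : (ι ≫ p₁) ≫ (e ≫ d) = 0 := by
    rw [Category.assoc, hpb.w, ← Category.assoc, hιp₂, zero_comp]
  obtain ⟨β₀, hβ₀, -⟩ := S.is_kernel hμ (ι ≫ p₁) hιp₁d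
  have hιρ : ι ≫ ρ = -(β₀ ≫ γ) := by
    refine (cancel_mono κ).1 ?_
    rw [Category.assoc, hρ, Preadditive.comp_sub, hιp₂, zero_sub, Preadditive.neg_comp,
      Category.assoc, hγ, ← Category.assoc, ← hβ₀, Category.assoc]
  have hιψ : ι ≫ ψ = 0 := by
    have e1 : ι ≫ ψ = (ι ≫ p₁) ≫ gW + (ι ≫ ρ) ≫ jk := by
      rw [hψ, Preadditive.comp_add, Category.assoc, Category.assoc]
    rw [e1, hιρ, ← hβ₀, Category.assoc, hpo.w, Preadditive.neg_comp, Category.assoc,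
      add_neg_cancel]
  obtain ⟨ω, hω, -⟩ := S.is_cokernel hι ψ hιψ
  haveI hp₂epi : Epi p₂ := conf_defl_epi hι
  have hωθ : ω ≫ θ = 𝟙 Y := by
    rw [← cancel_epi p₂, ← Category.assoc, hω, Category.comp_id, hψ,
      Preadditive.add_comp, Category.assoc, Category.assoc, hθ1, hθ2, hρ]
    abel
  have hsρ : s ≫ ρ = 0 := by
    rw [← cancel_mono κ, Category.assoc, hρ, Preadditive.comp_sub, hs2,
      ← Category.assoc, hs1, Category.id_comp, sub_self, zero_comp]
  have hlamρ : lam ≫ ρ = 𝟙 k := by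
    rw [← cancel_mono κ, Category.assoc, hρ, Preadditive.comp_sub, hlam2,
      ← Category.assoc, hlam1, zero_comp, sub_zero, Category.id_comp]
  have hθω : θ ≫ ω = 𝟙 V₂ := by
    apply hpo.hom_ext
    · rw [← Category.assoc, hθ1, Category.comp_id, ← hs2, Category.assoc, hω, hψ,
        Preadditive.comp_add, ← Category.assoc, ← Category.assoc, hs1, hsρ,
        Category.id_comp, zero_comp, add_zero]
    · rw [← Category.assoc, hθ2, Category.comp_id, ← hlam2, Category.assoc, hω, hψ,
        Preadditive.comp_add, ← Category.assoc, ← Category.assoc, hlam1, hlamρ,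
        zero_comp, zero_add, Category.id_comp]
  have hfin := conf_iso_mid' hcf θ ω hθω hωθ
  rw [hθ2] at hfin
  have h2 : ω ≫ eV = d := by rw [← hθd, ← Category.assoc, hωθ, Category.id_comp]
  rwa [h2] at hfin

/-- the pair lemma -/
lemma pairDefl {K Y B A K₀ : E} {a : K ⟶ Y} {b : Y ⟶ B} (hab : S.conf a b)
    {f : Y ⟶ A} {a₀ : K₀ ⟶ K} {p₀ : K ⟶ A} (h₀ : S.conf a₀ p₀) (hf : a ≫ f = p₀)
    (B1 : BinProd A B) :
    S.conf (a₀ ≫ a) (B1.lift f b) := by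
  obtain ⟨B2⟩ := exists_binProd S K Y
  obtain ⟨B3⟩ := exists_binProd S A Y
  have hab0 : a ≫ b = 0 := S.comp_zero hab
  have hm23d : S.IsDeflation (B3.lift (B2.fst ≫ p₀) B2.snd) := defl_prod ⟨_, _, h₀⟩ B2 B3
  have hm31d : S.IsDeflation (B1.lift B3.fst (B3.snd ≫ b)) :=
    defl_prod (S := S) (p₀ := b) ⟨_, _, hab⟩ B3.swap B1.swap
  have huu2 : (B3.snd ≫ f ≫ B3.lift (𝟙 A) 0) ≫ (B3.snd ≫ f ≫ B3.lift (𝟙 A) 0) = 0 := by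
    simp only [Category.assoc, BinProd.lift_snd_assoc, zero_comp, comp_zero]
  have hW1d : S.IsDeflation
      (B3.lift (B2.fst ≫ p₀) B2.snd ≫ (𝟙 B3.P + B3.snd ≫ f ≫ B3.lift (𝟙 A) 0)) := by
    obtain ⟨Kw, ιw, hw⟩ := hm23d
    exact ⟨_, _, conf_iso_right' hw _ _ (unipotent_comp _ huu2) (unipotent_comp' _ huu2)⟩
  obtain ⟨G₀, μ₀, hμ₀⟩ := S.defl_comp hW1d hm31d
  have hcomp : (B2.fst ≫ a + B2.snd) ≫ B1.lift f b =
      (B3.lift (B2.fst ≫ p₀) B2.snd ≫ (𝟙 B3.P + B3.snd ≫ f ≫ B3.lift (𝟙 A) 0)) ≫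
        B1.lift B3.fst (B3.snd ≫ b) := by
    apply B1.hom_ext
    · simp only [Category.assoc, B1.lift_fst, BinProd.lift_fst_assoc, Preadditive.add_comp,
        Preadditive.comp_add, Category.id_comp, Category.comp_id, B3.lift_fst,
        BinProd.lift_snd_assoc, B3.lift_snd, ← hf]
    · simp only [Category.assoc, B1.lift_snd, BinProd.lift_snd_assoc, Preadditive.add_comp,
        Preadditive.comp_add, Category.id_comp, Category.comp_id, hab0, zero_comp, comp_zero,
        add_zero, zero_add, BinProd.lift_fst_assoc, B3.lift_fst, B3.lift_snd]
  rw [← hcomp] at hμ₀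
  haveI hmono1 := conf_infl_mono h₀
  haveI hmono2 := conf_infl_mono hab
  have hap : a₀ ≫ p₀ = 0 := S.comp_zero h₀
  refine conf_of_ker_precomp ?_ ?_ (mono_comp _ _) hμ₀
  · apply B1.hom_ext
    · simp only [Category.assoc, B1.lift_fst, hf, hap, zero_comp]
    · simp only [Category.assoc, B1.lift_snd, hab0, comp_zero, zero_comp]
  · intro V g hg
    have hgb : g ≫ b = 0 := by
      have := congrArg (· ≫ B1.snd) hg
      simpa only [Category.assoc, B1.lift_snd, zero_comp] using this
    have hgf : g ≫ f = 0 := by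
      have := congrArg (· ≫ B1.fst) hg
      simpa only [Category.assoc, B1.lift_fst, zero_comp] using this
    obtain ⟨x, hx, -⟩ := S.is_kernel hab g hgb
    have hxp : x ≫ p₀ = 0 := by rw [← hf, ← Category.assoc, hx, hgf]
    obtain ⟨y, hy, -⟩ := S.is_kernel h₀ x hxp
    exact ⟨y, by rw [← Category.assoc, hy, hx]⟩

end Auxiliary

section AdjHelpers

lemma unitFactor {F : Set E} {l : E ⥤ ObjectProperty.FullSubcategory (· ∈ F)}
    (adjF : l ⊣ ObjectProperty.ι (· ∈ F)) (X : E) {W : E} (hW : W ∈ F) (f : X ⟶ W) :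
    ∃! g : (l ⋙ ObjectProperty.ι (· ∈ F)).obj X ⟶ W,
      adjF.unit.app X ≫ g = f := by
  refine ⟨((adjF.homEquiv X ⟨W, hW⟩).symm f).hom, ?_, ?_⟩
  · have h := (adjF.homEquiv X ⟨W, hW⟩).apply_symm_apply f
    rw [Adjunction.homEquiv_unit] at h
    exact h
  · intro g hg
    have h2 : (adjF.homEquiv X ⟨W, hW⟩) (ObjectProperty.homMk g) = f := by
      rw [Adjunction.homEquiv_unit]; exact hg
    have h3 := congrArg (adjF.homEquiv X ⟨W, hW⟩).symm h2
    rw [Equiv.symm_apply_apply] at h3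
    rw [← h3]; rfl

lemma counitFactor {T : Set E} {r : E ⥤ ObjectProperty.FullSubcategory (· ∈ T)}
    (adjT : ObjectProperty.ι (· ∈ T) ⊣ r) (X : E) {W : E} (hW : W ∈ T) (f : W ⟶ X) :
    ∃! g : W ⟶ (r ⋙ ObjectProperty.ι (· ∈ T)).obj X,
      g ≫ adjT.counit.app X = f := by
  refine ⟨((adjT.homEquiv ⟨W, hW⟩ X) f).hom, ?_, ?_⟩
  · have h := (adjT.homEquiv ⟨W, hW⟩ X).symm_apply_apply f
    rw [Adjunction.homEquiv_counit] at h
    exact h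
  · intro g hg
    have h2 : (adjT.homEquiv ⟨W, hW⟩ X).symm (ObjectProperty.homMk g) = f := by
      rw [Adjunction.homEquiv_counit]; exact hg
    have h3 := congrArg (adjT.homEquiv ⟨W, hW⟩ X) h2
    rw [Equiv.apply_symm_apply] at h3
    rw [← h3]; rfl

lemma kerUnit_orth {S : ExactStructure E} {F : Set E} (hFext : ExtClosed S F)
    {l : E ⥤ ObjectProperty.FullSubcategory (· ∈ F)} (adjF : l ⊣ ObjectProperty.ι (· ∈ F))
    {Z kZ : E} {κ : kZ ⟶ Z} (h : S.conf κ (adjF.unit.app Z)) : kZ ∈ homOrthLeft F := by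
  intro w hw g
  obtain ⟨P₀, j₀, g₀, e₀, hpo, hconf, hge⟩ := pushoutConf h g
  have hP₀ : P₀ ∈ F := hFext hconf hw (l.obj Z).property
  obtain ⟨ψ, hψ, -⟩ := unitFactor adjF Z hP₀ g₀
  have h1 : g ≫ j₀ = 0 := by
    rw [← hpo.w, ← hψ, ← Category.assoc, S.comp_zero h, zero_comp]
  haveI := conf_infl_mono hconf
  rw [← cancel_mono j₀, h1, zero_comp]

lemma cokerCounit_orth {S : ExactStructure E} {T : Set E} (hText : ExtClosed S T)
    {r : E ⥤ ObjectProperty.FullSubcategory (· ∈ T)} (adjT : ObjectProperty.ι (· ∈ T) ⊣ r)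
    {X cX : E} {π : X ⟶ cX} (h : S.conf (adjT.counit.app X) π) : cX ∈ homOrthRight T := by
  intro w hw g
  obtain ⟨PB, pb₁, pb₂, s0, hpb, hconf, hs0⟩ := pullbackConf h g
  have hPB : PB ∈ T := hText hconf (r.obj X).property hw
  obtain ⟨ψ, hψ, -⟩ := counitFactor adjT X hPB pb₁
  have h1 : pb₂ ≫ g = 0 := by
    rw [← hpb.w, ← hψ, Category.assoc, S.comp_zero h, comp_zero]
  haveI := conf_defl_epi hconf
  rw [← cancel_epi pb₂, h1, comp_zero]

end AdjHelpers


/-- A weakly left admissible subcategory `F` of an exact category `E`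
(the inclusion `δ_*` has a left adjoint `δ^* = l` whose unit is a deflation) is left
admissible, i.e. `Ext¹(^{⊥₀}F, F) = 0` (every conflation `f' → X → t` with `f' ∈ F`,
`t ∈ ^{⊥₀}F` splits), if and only if `δ^*` is exact.  Dually, a weakly right admissible
`T` is right admissible (`Ext¹(T, T^{⊥₀}) = 0`) if and only if the right adjoint
`ι^! = r` of the inclusion is exact. -/
theorem admissible_iff_adjoint_exact
    (S : ExactStructure E) (F T : Set E)
    (hFext : ExtClosed S F) (hText : ExtClosed S T)
    -- δ^* ⊣ δ_* with deflation units (weak left admissibility of F)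
    (l : E ⥤ ObjectProperty.FullSubcategory (· ∈ F))
    (adjF : l ⊣ ObjectProperty.ι (· ∈ F))
    (hunit : ∀ X : E, S.IsDeflation (adjF.unit.app X))
    -- ι_* ⊣ ι^! with inflation counits (weak right admissibility of T)
    (r : E ⥤ ObjectProperty.FullSubcategory (· ∈ T))
    (adjT : ObjectProperty.ι (· ∈ T) ⊣ r)
    (hcounit : ∀ X : E, S.IsInflation (adjT.counit.app X)) :
    ((∀ {f' X t : E} (i : f' ⟶ X) (d : X ⟶ t), S.conf i d →
        f' ∈ F → t ∈ homOrthLeft F → ∃ ρ : X ⟶ f', i ≫ ρ = 𝟙 f') ↔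
      (∀ {X Y Z : E} (i : X ⟶ Y) (d : Y ⟶ Z), S.conf i d →
        S.conf ((l ⋙ ObjectProperty.ι (· ∈ F)).map i)
          ((l ⋙ ObjectProperty.ι (· ∈ F)).map d))) ∧
    ((∀ {f'' X t'' : E} (i : f'' ⟶ X) (d : X ⟶ t''), S.conf i d →
        f'' ∈ homOrthRight T → t'' ∈ T → ∃ ρ : X ⟶ f'', i ≫ ρ = 𝟙 f'') ↔
      (∀ {X Y Z : E} (i : X ⟶ Y) (d : Y ⟶ Z), S.conf i d →
        S.conf ((r ⋙ ObjectProperty.ι (· ∈ T)).map i)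
          ((r ⋙ ObjectProperty.ι (· ∈ T)).map d))) := by
  constructor
  · constructor
    · -- primal: splitting of Ext¹(⊥F, F) implies exactness of l
      intro hsplit X Y Z i d hconf
      obtain ⟨kZ, κZ, hκZ⟩ := hunit Z
      have hkZorth : kZ ∈ homOrthLeft F := kerUnit_orth hFext adjF hκZ
      have hepiX : Epi (adjF.unit.app X) := by
        obtain ⟨k0, κ0, h0⟩ := hunit X; exact conf_defl_epi h0
      have hepiY : Epi (adjF.unit.app Y) := by
        obtain ⟨k0, κ0, h0⟩ := hunit Y; exact conf_defl_epi h0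
      -- Step A: push out the conflation along the unit of X
      obtain ⟨P, j, u, e, hpoA, hje, hue⟩ := pushoutConf hconf (adjF.unit.app X)
      -- Step B: pull back (j, e) along κZ
      obtain ⟨Q, q₁, q₂, hpbB, K₁, ι₁, hι₁⟩ := S.pullback_defl e κZ ⟨_, _, hje⟩
      have hωw : j ≫ e = (0 : _ ⟶ kZ) ≫ κZ := by rw [S.comp_zero hje, zero_comp]
      set ω := hpbB.lift j 0 hωw with hωdef
      have hω1 : ω ≫ q₁ = j := hpbB.lift_fst _ _ _
      have hω2 : ω ≫ q₂ = 0 := hpbB.lift_snd _ _ _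
      haveI hmonoκZ : Mono κZ := conf_infl_mono hκZ
      haveI hmonoj : Mono j := conf_infl_mono hje
      have hmonoq₁ : Mono q₁ := by
        refine ⟨fun {V} a b hab => ?_⟩
        refine hpbB.hom_ext hab ?_
        have h2 : (a ≫ q₂) ≫ κZ = (b ≫ q₂) ≫ κZ := by
          rw [Category.assoc, Category.assoc, ← hpbB.w, ← Category.assoc, ← Category.assoc,
            hab]
        exact (cancel_mono κZ).1 h2
      have hωconf : S.conf ω q₂ := by
        refine conf_of_kernel hι₁ ω hω2 ?_ ?_
        · intro V g hg
          have hgd : (g ≫ q₁) ≫ e = 0 := by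
            rw [Category.assoc, hpbB.w, ← Category.assoc, hg, zero_comp]
          obtain ⟨x, hx, -⟩ := S.is_kernel hje (g ≫ q₁) hgd
          refine ⟨x, hpbB.hom_ext ?_ ?_⟩
          · rw [Category.assoc, hω1, hx]
          · rw [Category.assoc, hω2, comp_zero, hg]
        · refine ⟨fun {V} a b hab => ?_⟩
          have h2 : a ≫ j = b ≫ j := by
            rw [← hω1, ← Category.assoc, ← Category.assoc, hab]
          exact (cancel_mono j).1 h2
      have hXF : ((l ⋙ ObjectProperty.ι (· ∈ F)).obj X) ∈ F := (l.obj X).property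
      obtain ⟨ρ, hρ⟩ := hsplit ω q₂ hωconf hXF hkZorth
      -- Step C: the composite deflation e ≫ η_Z has kernel q₁
      obtain ⟨K₂, ι₂, hι₂⟩ := S.defl_comp ⟨_, _, hje⟩ ⟨_, _, hκZ⟩
      have hq₁conf : S.conf q₁ (e ≫ adjF.unit.app Z) := by
        refine conf_of_kernel hι₂ q₁ ?_ ?_ hmonoq₁
        · rw [← Category.assoc, hpbB.w, Category.assoc, S.comp_zero hκZ, comp_zero]
        · intro V g hg
          have hge2 : (g ≫ e) ≫ adjF.unit.app Z = 0 := by rw [Category.assoc]; exact hg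
          obtain ⟨y, hy, -⟩ := S.is_kernel hκZ (g ≫ e) hge2
          exact ⟨hpbB.lift g y hy.symm, hpbB.lift_fst g y hy.symm⟩
      -- Step D: push out along the retraction ρ
      obtain ⟨M, j₂, p, e₂, hpoD, hj₂e₂, hpe₂⟩ := pushoutConf hq₁conf ρ
      have hjp : j ≫ p = j₂ := by
        rw [← hω1, Category.assoc, hpoD.w, ← Category.assoc, hρ, Category.id_comp]
      have hMF : M ∈ F := hFext hj₂e₂ (l.obj X).property (l.obj Z).property
      have hηj₂ : adjF.unit.app X ≫ j₂ = i ≫ (u ≫ p) := by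
        rw [← hjp, ← Category.assoc, ← hpoA.w, Category.assoc]
      -- uniqueness of factorizations through M
      have hMuniq : ∀ {w : E} (h h' : M ⟶ w), (u ≫ p) ≫ h = (u ≫ p) ≫ h' → h = h' := by
        intro w h h' hhh
        have hδv : (u ≫ p) ≫ (h - h') = 0 := by
          rw [Preadditive.comp_sub, hhh, sub_self]
        have hα : j₂ ≫ (h - h') = 0 := by
          have h1 : adjF.unit.app X ≫ (j₂ ≫ (h - h')) = adjF.unit.app X ≫ 0 := by
            rw [comp_zero, ← Category.assoc, hηj₂, Category.assoc, hδv, comp_zero]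
          exact (cancel_epi _).1 h1
        have hpδ : p ≫ (h - h') = 0 := by
          apply hpoA.hom_ext
          · rw [← Category.assoc, hδv, comp_zero]
          · rw [← Category.assoc, hjp, hα, comp_zero]
        have hδ0 : h - h' = 0 := by
          apply hpoD.hom_ext
          · rw [hpδ, comp_zero]
          · rw [hα, comp_zero]
        exact sub_eq_zero.1 hδ0
      -- universal property of (M, u ≫ p)
      have huniv : ∀ (w : E), w ∈ F → ∀ f : Y ⟶ w, ∃! h : M ⟶ w, (u ≫ p) ≫ h = f := by
        intro w hw f
        obtain ⟨f₁, hf₁, -⟩ := unitFactor adjF X hw (i ≫ f)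
        have hwA : i ≫ f = adjF.unit.app X ≫ f₁ := hf₁.symm
        have hfP1 : u ≫ hpoA.desc f f₁ hwA = f := hpoA.inl_desc _ _ _
        have hfP2 : j ≫ hpoA.desc f f₁ hwA = f₁ := hpoA.inr_desc _ _ _
        have hdiff : q₁ ≫ hpoA.desc f f₁ hwA = ρ ≫ f₁ := by
          have h0 : ω ≫ (q₁ ≫ hpoA.desc f f₁ hwA - ρ ≫ f₁) = 0 := by
            rw [Preadditive.comp_sub, ← Category.assoc, ← Category.assoc, hω1, hρ, hfP2,
              Category.id_comp, sub_self]
          obtain ⟨g₀, hg₀, -⟩ := S.is_cokernel hωconf _ h0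
          have hg00 : g₀ = 0 := hkZorth w hw g₀
          rw [hg00, comp_zero] at hg₀
          exact sub_eq_zero.1 hg₀.symm
        refine ⟨hpoD.desc (hpoA.desc f f₁ hwA) f₁ hdiff, ?_, ?_⟩
        · show (u ≫ p) ≫ _ = f
          rw [Category.assoc, hpoD.inl_desc, hfP1]
        · intro h hh
          refine hMuniq h _ ?_
          rw [hh, Category.assoc, hpoD.inl_desc, hfP1]
      -- identify M with l Y
      obtain ⟨φ₁, hφ₁, -⟩ := unitFactor adjF Y hMF (u ≫ p)
      obtain ⟨φ₂, hφ₂, -⟩ := huniv _ (l.obj Y).property (adjF.unit.app Y)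
      have hφ₁₂ : φ₁ ≫ φ₂ = 𝟙 _ := by
        obtain ⟨g, hg, hgu⟩ := unitFactor adjF Y (l.obj Y).property (adjF.unit.app Y)
        have e1 := hgu (φ₁ ≫ φ₂) (by
          show adjF.unit.app Y ≫ (φ₁ ≫ φ₂) = adjF.unit.app Y
          rw [← Category.assoc, hφ₁, hφ₂])
        have e2 := hgu (𝟙 _) (by
          show adjF.unit.app Y ≫ 𝟙 _ = adjF.unit.app Y
          rw [Category.comp_id])
        rw [e1, e2]
      have hφ₂₁ : φ₂ ≫ φ₁ = 𝟙 M := by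
        refine hMuniq _ _ ?_
        rw [Category.comp_id, ← Category.assoc, hφ₂, hφ₁]
      have hfin := conf_iso_mid' hj₂e₂ φ₂ φ₁ hφ₂₁ hφ₁₂
      have hnat := adjF.unit.naturality i
      rw [Functor.id_map] at hnat
      have hLi : j₂ ≫ φ₂ = (l ⋙ ObjectProperty.ι (· ∈ F)).map i := by
        refine (cancel_epi (adjF.unit.app X)).1 ?_
        rw [← Category.assoc, hηj₂, Category.assoc, hφ₂, hnat]
      have hnatd := adjF.unit.naturality d
      rw [Functor.id_map] at hnatd
      have hLd : φ₁ ≫ e₂ = (l ⋙ ObjectProperty.ι (· ∈ F)).map d := by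
        refine (cancel_epi (adjF.unit.app Y)).1 ?_
        rw [← Category.assoc, hφ₁, Category.assoc, hpe₂, ← Category.assoc, hue, hnatd]
      rw [hLi, hLd] at hfin
      exact hfin
    · -- primal: exactness of l implies splitting
      intro hex f' X t i d hconf hf' ht
      obtain ⟨kt, κt, hκt⟩ := hunit t
      have hη0 : adjF.unit.app t = 0 := ht _ (l.obj t).property _
      have hid0 : 𝟙 ((l ⋙ ObjectProperty.ι (· ∈ F)).obj t) = 0 := by
        obtain ⟨g, hg, hgu⟩ := S.is_cokernel hκt
          (0 : t ⟶ (l ⋙ ObjectProperty.ι (· ∈ F)).obj t) (by rw [comp_zero])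
        have e1 := hgu (𝟙 _) (by show adjF.unit.app t ≫ 𝟙 _ = 0; rw [Category.comp_id, hη0])
        have e2 := hgu 0 (by show adjF.unit.app t ≫ (0 : _) = 0; rw [comp_zero])
        rw [e1, e2]
      have hexc := hex i d hconf
      have hLd0 : (l ⋙ ObjectProperty.ι (· ∈ F)).map d = 0 := by
        calc (l ⋙ ObjectProperty.ι (· ∈ F)).map d
            = (l ⋙ ObjectProperty.ι (· ∈ F)).map d ≫ 𝟙 _ := (Category.comp_id _).symm
          _ = 0 := by rw [hid0, comp_zero]
      obtain ⟨σ, hσ, -⟩ := S.is_kernel hexc (𝟙 _) (by rw [Category.id_comp, hLd0])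
      haveI := conf_infl_mono hexc
      have hLiσ : (l ⋙ ObjectProperty.ι (· ∈ F)).map i ≫ σ = 𝟙 _ := by
        rw [← cancel_mono ((l ⋙ ObjectProperty.ι (· ∈ F)).map i), Category.assoc,
          hσ, Category.comp_id, Category.id_comp]
      obtain ⟨τ, hτ, -⟩ := unitFactor adjF f' hf' (𝟙 f')
      have hnat := adjF.unit.naturality i
      rw [Functor.id_map] at hnat
      refine ⟨adjF.unit.app X ≫ σ ≫ τ, ?_⟩
      rw [← Category.assoc, hnat, Category.assoc,
        show (l ⋙ ObjectProperty.ι (· ∈ F)).map i ≫ σ ≫ τ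
          = ((l ⋙ ObjectProperty.ι (· ∈ F)).map i ≫ σ) ≫ τ from
          (Category.assoc _ _ _).symm,
        hLiσ, Category.id_comp, hτ]
  · constructor
    · -- dual: splitting of Ext¹(T⊥, T) implies exactness of r
      intro hsplit X Y Z i d hconf
      obtain ⟨cX, πX, hπX⟩ := hcounit X
      have hcXorth : cX ∈ homOrthRight T := cokerCounit_orth hText adjT hπX
      have hcinj : ∀ {W V : E}, W ∈ T →
          ∀ (a b : W ⟶ (r ⋙ ObjectProperty.ι (· ∈ T)).obj V),
          a ≫ adjT.counit.app V = b ≫ adjT.counit.app V → a = b := by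
        intro W V hW a b hab
        obtain ⟨g, hg, hgu⟩ := counitFactor adjT V hW (b ≫ adjT.counit.app V)
        have e1 := hgu a (by show a ≫ adjT.counit.app V = b ≫ adjT.counit.app V; exact hab)
        have e2 := hgu b (by show b ≫ adjT.counit.app V = b ≫ adjT.counit.app V; rfl)
        rw [e1, e2]
      -- Step A': pull back the conflation along the counit of Z
      obtain ⟨P', p₁, p₂, w₁, hpbA, hw₁conf, hw₁p₁⟩ := pullbackConf hconf (adjT.counit.app Z)
      -- Step B': push out (w₁, p₂) along πX
      obtain ⟨Q', jb, q, eb, hpoB, hjbconf, hqeb⟩ := pushoutConf hw₁conf πX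
      -- split the conflation (jb, eb) using the hypothesis
      obtain ⟨ρb, hρb⟩ := hsplit jb eb hjbconf hcXorth (r.obj Z).property
      haveI hjbmono : Mono jb := conf_infl_mono hjbconf
      haveI hebepi : Epi eb := conf_defl_epi hjbconf
      obtain ⟨sb, hsb, -⟩ := S.is_cokernel hjbconf (𝟙 Q' - ρb ≫ jb)
        (by rw [Preadditive.comp_sub, Category.comp_id, ← Category.assoc, hρb,
          Category.id_comp, sub_self])
      have hsbe : sb ≫ eb = 𝟙 _ := by
        rw [← cancel_epi eb, ← Category.assoc, hsb, Preadditive.sub_comp, Category.id_comp,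
          Category.assoc, S.comp_zero hjbconf, comp_zero, sub_zero, Category.comp_id]
      have hsbρ : sb ≫ ρb = 0 := by
        rw [← cancel_mono jb, Category.assoc, zero_comp]
        have h1 : ρb ≫ jb = 𝟙 Q' - eb ≫ sb := by rw [hsb]; abel
        rw [h1, Preadditive.comp_sub, Category.comp_id, ← Category.assoc, hsbe,
          Category.id_comp, sub_self]
      -- the pair lemma gives the conflation (ε_X ≫ w₁, q)
      obtain ⟨B1⟩ := exists_binProd S cX ((r ⋙ ObjectProperty.ι (· ∈ T)).obj Z)
      have hwq : w₁ ≫ (q ≫ ρb) = πX := by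
        rw [← Category.assoc, hpoB.w, Category.assoc, hρb, Category.comp_id]
      have hpair : S.conf (adjT.counit.app X ≫ w₁) (B1.lift (q ≫ ρb) p₂) :=
        pairDefl hw₁conf hπX hwq B1
      have hξζ : (B1.fst ≫ jb + B1.snd ≫ sb) ≫ B1.lift ρb eb = 𝟙 B1.P := by
        apply B1.hom_ext
        · rw [Category.assoc, B1.lift_fst, Category.id_comp, Preadditive.add_comp,
            Category.assoc, Category.assoc, hρb, Category.comp_id, hsbρ, comp_zero, add_zero]
        · rw [Category.assoc, B1.lift_snd, Category.id_comp, Preadditive.add_comp,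
            Category.assoc, Category.assoc, S.comp_zero hjbconf, comp_zero, zero_add, hsbe,
            Category.comp_id]
      have hζξ : B1.lift ρb eb ≫ (B1.fst ≫ jb + B1.snd ≫ sb) = 𝟙 Q' := by
        rw [Preadditive.comp_add, BinProd.lift_fst_assoc, BinProd.lift_snd_assoc, hsb]
        abel
      have hLξ : B1.lift (q ≫ ρb) p₂ ≫ (B1.fst ≫ jb + B1.snd ≫ sb) = q := by
        simp only [Preadditive.comp_add, BinProd.lift_fst_assoc, BinProd.lift_snd_assoc,
          Category.assoc, ← hqeb, hsb, Preadditive.comp_sub, Category.comp_id]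
        abel
      have hconfq : S.conf (adjT.counit.app X ≫ w₁) q := by
        have h2 := conf_iso_right' hpair (B1.fst ≫ jb + B1.snd ≫ sb) (B1.lift ρb eb) hξζ hζξ
        rwa [hLξ] at h2
      -- Step D': pull back (ε_X ≫ w₁, q) along the section sb
      obtain ⟨M', m₁, m₂, jM, hpbD, hjMconf, hjMm₁⟩ := pullbackConf hconfq sb
      have hm₁p₂ : m₁ ≫ p₂ = m₂ := by
        rw [← hqeb, ← Category.assoc, hpbD.w, Category.assoc, hsbe, Category.comp_id]
      have hM'T : M' ∈ T := hText hjMconf (r.obj X).property (r.obj Z).property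
      -- uniqueness of factorizations through M'
      have hM'uniq : ∀ {w : E}, w ∈ T → ∀ (h h' : w ⟶ M'),
          h ≫ (m₁ ≫ p₁) = h' ≫ (m₁ ≫ p₁) → h = h' := by
        intro w hw h h' hhh
        have hδ : (h - h') ≫ (m₁ ≫ p₁) = 0 := by
          rw [Preadditive.sub_comp, hhh, sub_self]
        have hδ' : ((h - h') ≫ m₁) ≫ p₁ = 0 := by rw [Category.assoc]; exact hδ
        have hα : (h - h') ≫ m₂ = 0 := by
          refine hcinj hw _ 0 ?_
          rw [zero_comp, Category.assoc, ← hm₁p₂, Category.assoc, ← hpbA.w,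
            ← Category.assoc, ← Category.assoc, hδ', zero_comp]
        have hm₁0 : (h - h') ≫ m₁ = 0 := by
          apply hpbA.hom_ext
          · rw [hδ', zero_comp]
          · rw [Category.assoc, hm₁p₂, hα, zero_comp]
        have hδ0 : h - h' = 0 := by
          apply hpbD.hom_ext
          · rw [hm₁0, zero_comp]
          · rw [hα, zero_comp]
        exact sub_eq_zero.1 hδ0
      -- universal property of (M', m₁ ≫ p₁)
      have hM'univ : ∀ (w : E), w ∈ T → ∀ f : w ⟶ Y, ∃! h : w ⟶ M', h ≫ (m₁ ≫ p₁) = f := by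
        intro w hw f
        obtain ⟨f₁, hf₁, -⟩ := counitFactor adjT Z hw (f ≫ d)
        have hwlift : f ≫ d = f₁ ≫ adjT.counit.app Z := hf₁.symm
        have hfP1 : hpbA.lift f f₁ hwlift ≫ p₁ = f := hpbA.lift_fst _ _ _
        have hfP2 : hpbA.lift f f₁ hwlift ≫ p₂ = f₁ := hpbA.lift_snd _ _ _
        have hdiff : hpbA.lift f f₁ hwlift ≫ q = f₁ ≫ sb := by
          have h0 : (hpbA.lift f f₁ hwlift ≫ q - f₁ ≫ sb) ≫ eb = 0 := by
            rw [Preadditive.sub_comp, Category.assoc, Category.assoc, hqeb, hsbe,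
              Category.comp_id, hfP2, sub_self]
          obtain ⟨g₀, hg₀, -⟩ := S.is_kernel hjbconf _ h0
          have hg00 : g₀ = 0 := hcXorth w hw g₀
          rw [hg00, zero_comp] at hg₀
          exact sub_eq_zero.1 hg₀.symm
        refine ⟨hpbD.lift (hpbA.lift f f₁ hwlift) f₁ hdiff, ?_, ?_⟩
        · show hpbD.lift (hpbA.lift f f₁ hwlift) f₁ hdiff ≫ (m₁ ≫ p₁) = f
          rw [← Category.assoc, hpbD.lift_fst, hfP1]
        · intro h hh
          refine hM'uniq hw h _ ?_
          rw [hh, ← Category.assoc, hpbD.lift_fst, hfP1]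
      -- identify M' with r Y
      obtain ⟨φ₁, hφ₁, -⟩ := counitFactor adjT Y hM'T (m₁ ≫ p₁)
      obtain ⟨φ₂, hφ₂, -⟩ := hM'univ _ (r.obj Y).property (adjT.counit.app Y)
      have hφ₂' : (φ₂ ≫ m₁) ≫ p₁ = adjT.counit.app Y := by rw [Category.assoc]; exact hφ₂
      have hφ₂₁ : φ₂ ≫ φ₁ = 𝟙 _ := by
        refine hcinj (r.obj Y).property _ _ ?_
        rw [Category.assoc, hφ₁, Category.id_comp, hφ₂]
      have hφ₁₂ : φ₁ ≫ φ₂ = 𝟙 M' := by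
        refine hM'uniq hM'T _ _ ?_
        rw [Category.id_comp, Category.assoc, hφ₂, hφ₁]
      have hfin := conf_iso_mid' hjMconf φ₁ φ₂ hφ₁₂ hφ₂₁
      have hnat := adjT.counit.naturality i
      rw [Functor.id_map] at hnat
      have hLi : jM ≫ φ₁ = (r ⋙ ObjectProperty.ι (· ∈ T)).map i := by
        refine hcinj (r.obj X).property _ _ ?_
        rw [Category.assoc, hφ₁, ← Category.assoc, hjMm₁, Category.assoc, hw₁p₁, hnat]
      have hnatd := adjT.counit.naturality d
      rw [Functor.id_map] at hnatd
      have hLd : φ₂ ≫ m₂ = (r ⋙ ObjectProperty.ι (· ∈ T)).map d := by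
        refine hcinj (r.obj Y).property _ _ ?_
        rw [Category.assoc, ← hm₁p₂, Category.assoc, ← hpbA.w, ← Category.assoc,
          ← Category.assoc, hφ₂', hnatd]
      rw [hLi, hLd] at hfin
      exact hfin

    · -- dual: exactness of r implies splitting
      intro hex f'' Xm t'' i d hconf hf'' ht''
      obtain ⟨c0, π0, hπ0⟩ := hcounit f''
      have hε0 : adjT.counit.app f'' = 0 := hf'' _ (r.obj f'').property _
      have hid0 : 𝟙 ((r ⋙ ObjectProperty.ι (· ∈ T)).obj f'') = 0 := by
        obtain ⟨g, hg, hgu⟩ := S.is_kernel hπ0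
          (0 : (r ⋙ ObjectProperty.ι (· ∈ T)).obj f'' ⟶ f'') (by rw [zero_comp])
        have e1 := hgu (𝟙 _) (by show 𝟙 _ ≫ adjT.counit.app f'' = 0; rw [Category.id_comp, hε0])
        have e2 := hgu 0 (by show (0 : _) ≫ adjT.counit.app f'' = 0; rw [zero_comp])
        rw [e1, e2]
      have hexc := hex i d hconf
      have hRi0 : (r ⋙ ObjectProperty.ι (· ∈ T)).map i = 0 := by
        calc (r ⋙ ObjectProperty.ι (· ∈ T)).map i
            = 𝟙 _ ≫ (r ⋙ ObjectProperty.ι (· ∈ T)).map i := (Category.id_comp _).symm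
          _ = 0 := by rw [hid0, zero_comp]
      obtain ⟨σ, hσ, -⟩ := S.is_cokernel hexc (𝟙 _) (by rw [Category.comp_id, hRi0])
      haveI hRdepi : Epi ((r ⋙ ObjectProperty.ι (· ∈ T)).map d) := conf_defl_epi hexc
      have hσRd : σ ≫ (r ⋙ ObjectProperty.ι (· ∈ T)).map d = 𝟙 _ := by
        rw [← cancel_epi ((r ⋙ ObjectProperty.ι (· ∈ T)).map d), ← Category.assoc,
          hσ, Category.comp_id, Category.id_comp]
      obtain ⟨τ, hτ, -⟩ := counitFactor adjT t'' ht'' (𝟙 t'')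
      have hnat := adjT.counit.naturality d
      rw [Functor.id_map] at hnat
      have hsd : (τ ≫ (σ ≫ adjT.counit.app Xm)) ≫ d = 𝟙 t'' := by
        have h1 : (σ ≫ adjT.counit.app Xm) ≫ d = adjT.counit.app t'' := by
          rw [Category.assoc, ← hnat, ← Category.assoc, hσRd, Category.id_comp]
        rw [Category.assoc, h1, hτ]
      have hf0 : (𝟙 Xm - (d ≫ (τ ≫ (σ ≫ adjT.counit.app Xm)) : Xm ⟶ Xm)) ≫ d = 0 := by
        rw [Preadditive.sub_comp, Category.id_comp, Category.assoc, hsd, Category.comp_id,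
          sub_self]
      obtain ⟨ρ, hρ, -⟩ := S.is_kernel hconf _ hf0
      refine ⟨ρ, ?_⟩
      haveI := conf_infl_mono hconf
      rw [← cancel_mono i, Category.assoc, hρ, Preadditive.comp_sub, Category.comp_id,
        ← Category.assoc, S.comp_zero hconf, zero_comp, sub_zero, Category.id_comp]

end ExactCatPaper
end

section
/- Let q : A → B be a square-zero extension of additive categories with kernel bimodule K (i.e. q is essentially surjective, conservative, full, additive, and the composite of any two morphisms killed by q is zero). Then there is a B-bimodule M, unique up to unique isomorphism, such that K(A₁, A₂) ≅ M(q(A₁), q(A₂)) naturally in A₁, A₂. -/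
set_option linter.unusedSectionVars false
set_option maxHeartbeats 1000000


open CategoryTheory CategoryTheory.Limits Opposite

universe v₁ v₂ u₁ u₂

namespace SquareZeroKernel

variable {A : Type u₁} [Category.{v₁} A] [Preadditive A]
variable {B : Type u₂} [Category.{v₂} B] [Preadditive B]

/-- The kernel of an additive functor `q` on a Hom-group: morphisms killed by `q`. -/
def qker (q : A ⥤ B) [q.Additive] (A₁ A₂ : A) : AddSubgroup (A₁ ⟶ A₂) where
  carrier := {φ | q.map φ = 0}
  add_mem' := by intro a b ha hb; simp only [Set.mem_setOf_eq] at *; rw [q.map_add, ha, hb, add_zero]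
  zero_mem' := by simp only [Set.mem_setOf_eq]; exact q.map_zero _ _
  neg_mem' := by intro a ha; simp only [Set.mem_setOf_eq] at *; rw [q.map_neg, ha, neg_zero]

theorem mem_qker (q : A ⥤ B) [q.Additive] {A₁ A₂ : A} (φ : A₁ ⟶ A₂) :
    φ ∈ qker q A₁ A₂ ↔ q.map φ = 0 := Iff.rfl

/-- Naturality of a family of identifications of the kernel of `q` with a
`B`-bimodule `M` (an additive bifunctor `Bᵒᵖ × B → Ab`, curried). -/
def KernelBimoduleIso (q : A ⥤ B) [q.Additive] (M : Bᵒᵖ ⥤ B ⥤ AddCommGrpCat.{v₁})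
    (e : ∀ A₁ A₂ : A, qker q A₁ A₂ ≃+ (M.obj (op (q.obj A₁))).obj (q.obj A₂)) : Prop :=
  ∀ (A₁' A₁ A₂ A₂' : A) (f : A₁' ⟶ A₁) (g : A₂ ⟶ A₂') (φ : A₁ ⟶ A₂) (hφ : q.map φ = 0),
    e A₁' A₂' ⟨f ≫ φ ≫ g, by
      rw [mem_qker, q.map_comp, q.map_comp, hφ, Limits.zero_comp, Limits.comp_zero]⟩ =
      (M.map (q.map f).op).app (q.obj A₂')
        ((M.obj (op (q.obj A₁))).map (q.map g) (e A₁ A₂ ⟨φ, hφ⟩))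

section Aux

variable (q : A ⥤ B) [q.Additive] [q.Full] [q.EssSurj]

/-- Square-zero property. -/
def SqZero : Prop :=
  ∀ {X Y Z : A} (f : X ⟶ Y) (g : Y ⟶ Z), q.map f = 0 → q.map g = 0 → f ≫ g = 0

noncomputable def lft {b₁ b₂ : B} (f : b₁ ⟶ b₂) : q.objPreimage b₁ ⟶ q.objPreimage b₂ :=
  q.preimage ((q.objObjPreimageIso b₁).hom ≫ f ≫ (q.objObjPreimageIso b₂).inv)

@[simp] lemma q_lft {b₁ b₂ : B} (f : b₁ ⟶ b₂) :
    q.map (lft q f) = (q.objObjPreimageIso b₁).hom ≫ f ≫ (q.objObjPreimageIso b₂).inv :=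
  q.map_preimage _

noncomputable def preH (X : A) : q.objPreimage (q.obj X) ⟶ X :=
  q.preimage (q.objObjPreimageIso (q.obj X)).hom

noncomputable def preI (X : A) : X ⟶ q.objPreimage (q.obj X) :=
  q.preimage (q.objObjPreimageIso (q.obj X)).inv

@[simp] lemma q_preH (X : A) : q.map (preH q X) = (q.objObjPreimageIso (q.obj X)).hom :=
  q.map_preimage _

@[simp] lemma q_preI (X : A) : q.map (preI q X) = (q.objObjPreimageIso (q.obj X)).inv :=
  q.map_preimage _

variable {q}

lemma congr_left (hsq : SqZero q) {X Y Z : A} {u u' : X ⟶ Y} (h : q.map u = q.map u')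
    {φ : Y ⟶ Z} (hφ : q.map φ = 0) : u ≫ φ = u' ≫ φ := by
  have h0 : q.map (u - u') = 0 := by rw [q.map_sub, h, sub_self]
  have := hsq (u - u') φ h0 hφ
  rw [Preadditive.sub_comp, sub_eq_zero] at this
  exact this

lemma congr_right (hsq : SqZero q) {X Y Z : A} {φ : X ⟶ Y} (hφ : q.map φ = 0)
    {v v' : Y ⟶ Z} (h : q.map v = q.map v') : φ ≫ v = φ ≫ v' := by
  have h0 : q.map (v - v') = 0 := by rw [q.map_sub, h, sub_self]
  have := hsq φ (v - v') hφ h0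
  rw [Preadditive.comp_sub, sub_eq_zero] at this
  exact this

variable (q)

/-- The descended bimodule. -/
noncomputable def Mker (hsq : SqZero q) : Bᵒᵖ ⥤ B ⥤ AddCommGrpCat.{v₁} where
  obj b₁ :=
    { obj := fun b₂ => AddCommGrpCat.of (qker q (q.objPreimage b₁.unop) (q.objPreimage b₂))
      map := fun {b₂ b₂'} g => AddCommGrpCat.ofHom
        { toFun := fun ψ => ⟨ψ.1 ≫ lft q g, by
            rw [mem_qker, q.map_comp, show q.map ψ.1 = 0 from ψ.2, zero_comp]⟩
          map_zero' := by apply Subtype.ext; simp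
          map_add' := fun a b => by apply Subtype.ext; simp [Preadditive.add_comp] }
      map_id := fun b₂ => by
        ext ψ
        show ψ.1 ≫ lft q (𝟙 b₂) = ψ.1
        rw [congr_right hsq (show q.map ψ.1 = 0 from ψ.2)
          (v' := 𝟙 _) (by simp), Category.comp_id]
      map_comp := fun {b₂ b₂' b₂''} g g' => by
        ext ψ
        show ψ.1 ≫ lft q (g ≫ g') = (ψ.1 ≫ lft q g) ≫ lft q g'
        rw [Category.assoc]
        exact congr_right hsq (show q.map ψ.1 = 0 from ψ.2) (by simp) }
  map {b₁ b₁'} f :=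
    { app := fun b₂ => AddCommGrpCat.ofHom
        { toFun := fun ψ => ⟨lft q f.unop ≫ ψ.1, by
            rw [mem_qker, q.map_comp, show q.map ψ.1 = 0 from ψ.2, comp_zero]⟩
          map_zero' := by apply Subtype.ext; simp
          map_add' := fun a b => by apply Subtype.ext; simp [Preadditive.comp_add] }
      naturality := fun b₂ b₂' g => by
        ext ψ
        exact (Category.assoc _ _ _).symm }
  map_id := by
    intro b₁
    ext b₂ ψ
    show lft q (𝟙 b₁).unop ≫ ψ.1 = ψ.1
    rw [congr_left hsq (u' := 𝟙 _) (by simp) (show q.map ψ.1 = 0 from ψ.2), Category.id_comp]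
  map_comp := by
    intro b₁ b₁' b₁'' f g
    ext b₂ ψ
    show lft q (f ≫ g).unop ≫ ψ.1 = lft q g.unop ≫ lft q f.unop ≫ ψ.1
    rw [← Category.assoc]
    exact congr_left hsq (by simp) (show q.map ψ.1 = 0 from ψ.2)

lemma Mker_obj_additive (hsq : SqZero q) (b₁ : Bᵒᵖ) : ((Mker q hsq).obj b₁).Additive where
  map_add := by
    intro b₂ b₂' g g'
    ext ψ
    apply Subtype.ext
    show ψ.1 ≫ lft q (g + g') = ψ.1 ≫ lft q g + ψ.1 ≫ lft q g'
    rw [congr_right hsq (show q.map ψ.1 = 0 from ψ.2) (v' := lft q g + lft q g')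
      (by simp [Preadditive.add_comp, Preadditive.comp_add]), Preadditive.comp_add]

lemma Mker_additive (hsq : SqZero q) : (Mker q hsq).Additive where
  map_add := by
    intro b₁ b₁' f g
    ext b₂ ψ
    apply Subtype.ext
    show lft q (f + g).unop ≫ ψ.1 = lft q f.unop ≫ ψ.1 + lft q g.unop ≫ ψ.1
    rw [congr_left hsq (u' := lft q f.unop + lft q g.unop)
      (by simp [unop_add, Preadditive.add_comp, Preadditive.comp_add])
      (show q.map ψ.1 = 0 from ψ.2), Preadditive.add_comp]

noncomputable def eker (hsq : SqZero q) (A₁ A₂ : A) :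
    qker q A₁ A₂ ≃+ qker q (q.objPreimage (q.obj A₁)) (q.objPreimage (q.obj A₂)) where
  toFun φ := ⟨preH q A₁ ≫ φ.1 ≫ preI q A₂, by
    rw [mem_qker, q.map_comp, q.map_comp, show q.map φ.1 = 0 from φ.2, zero_comp, comp_zero]⟩
  invFun ψ := ⟨preI q A₁ ≫ ψ.1 ≫ preH q A₂, by
    rw [mem_qker, q.map_comp, q.map_comp, show q.map ψ.1 = 0 from ψ.2, zero_comp, comp_zero]⟩
  left_inv φ := by
    apply Subtype.ext
    show preI q A₁ ≫ (preH q A₁ ≫ φ.1 ≫ preI q A₂) ≫ preH q A₂ = φ.1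
    have h1 : (preI q A₁ ≫ preH q A₁) ≫ (φ.1 ≫ preI q A₂ ≫ preH q A₂)
        = 𝟙 A₁ ≫ (φ.1 ≫ preI q A₂ ≫ preH q A₂) :=
      congr_left hsq (by simp)
        (by rw [q.map_comp, show q.map φ.1 = 0 from φ.2, zero_comp])
    have h2 : φ.1 ≫ (preI q A₂ ≫ preH q A₂) = φ.1 ≫ 𝟙 A₂ :=
      congr_right hsq (show q.map φ.1 = 0 from φ.2) (by simp)
    simp only [Category.assoc] at h1 h2 ⊢
    rw [h1, Category.id_comp, h2, Category.comp_id]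
  right_inv ψ := by
    apply Subtype.ext
    show preH q A₁ ≫ (preI q A₁ ≫ ψ.1 ≫ preH q A₂) ≫ preI q A₂ = ψ.1
    have h1 : (preH q A₁ ≫ preI q A₁) ≫ (ψ.1 ≫ preH q A₂ ≫ preI q A₂)
        = 𝟙 _ ≫ (ψ.1 ≫ preH q A₂ ≫ preI q A₂) :=
      congr_left hsq (by simp)
        (by rw [q.map_comp, show q.map ψ.1 = 0 from ψ.2, zero_comp])
    have h2 : ψ.1 ≫ (preH q A₂ ≫ preI q A₂) = ψ.1 ≫ 𝟙 _ :=
      congr_right hsq (show q.map ψ.1 = 0 from ψ.2) (by simp)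
    simp only [Category.assoc] at h1 h2 ⊢
    rw [h1, Category.id_comp, h2, Category.comp_id]
  map_add' φ φ' := by
    apply Subtype.ext
    show preH q A₁ ≫ (φ.1 + φ'.1) ≫ preI q A₂
      = (preH q A₁ ≫ φ.1 ≫ preI q A₂) + (preH q A₁ ≫ φ'.1 ≫ preI q A₂)
    rw [Preadditive.add_comp, Preadditive.comp_add]

lemma recover (hsq : SqZero q) (b₁ : Bᵒᵖ) (b₂ : B)
    (ψ : qker q (q.objPreimage b₁.unop) (q.objPreimage b₂)) :
    ((Mker q hsq).map (q.objObjPreimageIso b₁.unop).inv.op).app b₂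
      (((Mker q hsq).obj (op (q.obj (q.objPreimage b₁.unop)))).map (q.objObjPreimageIso b₂).hom
        (eker q hsq (q.objPreimage b₁.unop) (q.objPreimage b₂) ψ)) = ψ := by
  apply Subtype.ext
  show lft q (q.objObjPreimageIso b₁.unop).inv ≫
      ((preH q _ ≫ ψ.1 ≫ preI q _) ≫ lft q (q.objObjPreimageIso b₂).hom) = ψ.1
  have h1 : (lft q (q.objObjPreimageIso b₁.unop).inv ≫ preH q (q.objPreimage b₁.unop)) ≫
      (ψ.1 ≫ preI q (q.objPreimage b₂) ≫ lft q (q.objObjPreimageIso b₂).hom)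
      = 𝟙 _ ≫ (ψ.1 ≫ preI q (q.objPreimage b₂) ≫ lft q (q.objObjPreimageIso b₂).hom) :=
    congr_left hsq (by simp)
      (by rw [q.map_comp, show q.map ψ.1 = 0 from ψ.2, zero_comp])
  have h2 : ψ.1 ≫ (preI q (q.objPreimage b₂) ≫ lft q (q.objObjPreimageIso b₂).hom)
      = ψ.1 ≫ 𝟙 _ :=
    congr_right hsq (show q.map ψ.1 = 0 from ψ.2) (by simp)
  simp only [Category.assoc] at h1 h2 ⊢
  rw [h1, Category.id_comp, h2, Category.comp_id]

end Aux

section Main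
variable (q : A ⥤ B) [q.Additive] [q.Full] [q.EssSurj]

lemma eker_natural (hsq : SqZero q) : KernelBimoduleIso q (Mker q hsq) (eker q hsq) := by
  intro A₁' A₁ A₂ A₂' f g φ hφ
  apply Subtype.ext
  show preH q A₁' ≫ (f ≫ φ ≫ g) ≫ preI q A₂'
      = lft q (q.map f) ≫ ((preH q A₁ ≫ φ ≫ preI q A₂) ≫ lft q (q.map g))
  have h1 : (lft q (q.map f) ≫ preH q A₁) ≫ (φ ≫ preI q A₂ ≫ lft q (q.map g))
      = (preH q A₁' ≫ f) ≫ (φ ≫ preI q A₂ ≫ lft q (q.map g)) :=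
    congr_left hsq (by simp)
      (by rw [q.map_comp, hφ, zero_comp])
  have h2 : ((preH q A₁' ≫ f) ≫ φ) ≫ (preI q A₂ ≫ lft q (q.map g))
      = ((preH q A₁' ≫ f) ≫ φ) ≫ (g ≫ preI q A₂') :=
    congr_right hsq (by rw [q.map_comp, hφ, comp_zero]) (by simp)
  simp only [Category.assoc] at h1 h2 ⊢
  rw [h1, h2]

lemma map_map (F : B ⥤ AddCommGrpCat.{v₁}) {X Y Z : B} (a : X ⟶ Y) (b : Y ⟶ Z) (x : F.obj X) :
    F.map b (F.map a x) = F.map (a ≫ b) x := by rw [F.map_comp]; rfl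

lemma nat_app {F G : B ⥤ AddCommGrpCat.{v₁}} (N : F ⟶ G) {X Y : B} (g : X ⟶ Y) (x : F.obj X) :
    G.map g (N.app X x) = N.app Y (F.map g x) :=
  (ConcreteCategory.congr_hom (N.naturality g) x).symm

lemma mapop_map (M' : Bᵒᵖ ⥤ B ⥤ AddCommGrpCat.{v₁}) {x y : Bᵒᵖ} (a : x ⟶ y) {c d : B}
    (g : c ⟶ d) (z : (M'.obj x).obj c) :
    (M'.map a).app d ((M'.obj x).map g z) = (M'.obj y).map g ((M'.map a).app c z) :=
  ConcreteCategory.congr_hom ((M'.map a).naturality g) z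

lemma mapop_mapop (M' : Bᵒᵖ ⥤ B ⥤ AddCommGrpCat.{v₁}) {x y z : Bᵒᵖ} (a : x ⟶ y) (b : y ⟶ z)
    (c : B) (w : (M'.obj x).obj c) :
    (M'.map b).app c ((M'.map a).app c w) = (M'.map (a ≫ b)).app c w := by
  rw [M'.map_comp]; rfl

lemma bif_nat {F G : Bᵒᵖ ⥤ B ⥤ AddCommGrpCat.{v₁}} (σ : F ⟶ G) {x y : Bᵒᵖ} (a : x ⟶ y) (c : B)
    (w : (F.obj x).obj c) :
    (σ.app y).app c ((F.map a).app c w) = (G.map a).app c ((σ.app x).app c w) :=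
  ConcreteCategory.congr_hom (NatTrans.congr_app (σ.naturality a) c) w

variable {q} in
lemma e'_comp_lft (hsq : SqZero q) (M' : Bᵒᵖ ⥤ B ⥤ AddCommGrpCat.{v₁})
    (e' : ∀ A₁ A₂ : A, qker q A₁ A₂ ≃+ (M'.obj (op (q.obj A₁))).obj (q.obj A₂))
    (he' : KernelBimoduleIso q M' e') (x : A) {b₂ b₂' : B} (g : b₂ ⟶ b₂')
    (ψ : qker q x (q.objPreimage b₂)) :
    e' x (q.objPreimage b₂') ⟨ψ.1 ≫ lft q g, by
        rw [mem_qker, q.map_comp, show q.map ψ.1 = 0 from ψ.2, zero_comp]⟩ =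
      (M'.obj (op (q.obj x))).map
        ((q.objObjPreimageIso b₂).hom ≫ g ≫ (q.objObjPreimageIso b₂').inv)
        (e' x (q.objPreimage b₂) ψ) := by
  have key := he' x x (q.objPreimage b₂) (q.objPreimage b₂') (𝟙 x) (lft q g) ψ.1 ψ.2
  have e1 : (⟨𝟙 x ≫ ψ.1 ≫ lft q g, by
      rw [mem_qker, q.map_comp, q.map_comp, show q.map ψ.1 = 0 from ψ.2, zero_comp,
        comp_zero]⟩ : qker q x (q.objPreimage b₂'))
      = ⟨ψ.1 ≫ lft q g, by
        rw [mem_qker, q.map_comp, show q.map ψ.1 = 0 from ψ.2, zero_comp]⟩ :=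
    Subtype.ext (Category.id_comp _)
  rw [e1] at key
  rw [key]
  simp [q_lft]

variable {q} in
lemma e'_lft_comp (hsq : SqZero q) (M' : Bᵒᵖ ⥤ B ⥤ AddCommGrpCat.{v₁})
    (e' : ∀ A₁ A₂ : A, qker q A₁ A₂ ≃+ (M'.obj (op (q.obj A₁))).obj (q.obj A₂))
    (he' : KernelBimoduleIso q M' e') (x : A) {b₁ b₁' : B} (f : b₁' ⟶ b₁)
    (ψ : qker q (q.objPreimage b₁) x) :
    e' (q.objPreimage b₁') x ⟨lft q f ≫ ψ.1, by
        rw [mem_qker, q.map_comp, show q.map ψ.1 = 0 from ψ.2, comp_zero]⟩ =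
      (M'.map ((q.objObjPreimageIso b₁').hom ≫ f ≫ (q.objObjPreimageIso b₁).inv).op).app
        (q.obj x) (e' (q.objPreimage b₁) x ψ) := by
  have key := he' (q.objPreimage b₁') (q.objPreimage b₁) x x (lft q f) (𝟙 x) ψ.1 ψ.2
  have e1 : (⟨lft q f ≫ ψ.1 ≫ 𝟙 x, by
      rw [mem_qker, q.map_comp, q.map_comp, show q.map ψ.1 = 0 from ψ.2, zero_comp,
        comp_zero]⟩ : qker q (q.objPreimage b₁') x)
      = ⟨lft q f ≫ ψ.1, by
        rw [mem_qker, q.map_comp, show q.map ψ.1 = 0 from ψ.2, comp_zero]⟩ :=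
    Subtype.ext (show lft q f ≫ ψ.1 ≫ 𝟙 x = lft q f ≫ ψ.1 by rw [Category.comp_id])
  rw [e1] at key
  rw [key]
  simp [q_lft]

variable {q} in
noncomputable def tau (hsq : SqZero q) (M' : Bᵒᵖ ⥤ B ⥤ AddCommGrpCat.{v₁})
    (e' : ∀ A₁ A₂ : A, qker q A₁ A₂ ≃+ (M'.obj (op (q.obj A₁))).obj (q.obj A₂))
    (he' : KernelBimoduleIso q M' e') : Mker q hsq ⟶ M' where
  app b₁ :=
    { app := fun b₂ =>
        AddCommGrpCat.ofHom (e' (q.objPreimage b₁.unop) (q.objPreimage b₂)).toAddMonoidHom ≫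
        (M'.obj (op (q.obj (q.objPreimage b₁.unop)))).map (q.objObjPreimageIso b₂).hom ≫
        (M'.map (q.objObjPreimageIso b₁.unop).inv.op).app b₂
      naturality := by
        intro b₂ b₂' g
        ext ψ
        show (M'.map (q.objObjPreimageIso b₁.unop).inv.op).app b₂'
            ((M'.obj (op (q.obj (q.objPreimage b₁.unop)))).map (q.objObjPreimageIso b₂').hom
              (e' (q.objPreimage b₁.unop) (q.objPreimage b₂')
                ⟨ψ.1 ≫ lft q g, by
                  rw [mem_qker, q.map_comp, show q.map ψ.1 = 0 from ψ.2, zero_comp]⟩))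
          = (M'.obj b₁).map g
            ((M'.map (q.objObjPreimageIso b₁.unop).inv.op).app b₂
              ((M'.obj (op (q.obj (q.objPreimage b₁.unop)))).map (q.objObjPreimageIso b₂).hom
                (e' (q.objPreimage b₁.unop) (q.objPreimage b₂) ψ)))
        rw [e'_comp_lft hsq M' e' he' _ g ψ]
        rw [map_map, nat_app ((M'.map (q.objObjPreimageIso b₁.unop).inv.op)) g]
        rw [map_map]
        have : ((q.objObjPreimageIso b₂).hom ≫ g ≫ (q.objObjPreimageIso b₂').inv) ≫
            (q.objObjPreimageIso b₂').hom = (q.objObjPreimageIso b₂).hom ≫ g := by simp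
        rw [this] }
  naturality := by
    intro b₁ b₁' f
    ext b₂ ψ
    show (M'.map (q.objObjPreimageIso b₁'.unop).inv.op).app b₂
        ((M'.obj (op (q.obj (q.objPreimage b₁'.unop)))).map (q.objObjPreimageIso b₂).hom
          (e' (q.objPreimage b₁'.unop) (q.objPreimage b₂)
            ⟨lft q f.unop ≫ ψ.1, by
              rw [mem_qker, q.map_comp, show q.map ψ.1 = 0 from ψ.2, comp_zero]⟩))
      = (M'.map f).app b₂
        ((M'.map (q.objObjPreimageIso b₁.unop).inv.op).app b₂
          ((M'.obj (op (q.obj (q.objPreimage b₁.unop)))).map (q.objObjPreimageIso b₂).hom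
            (e' (q.objPreimage b₁.unop) (q.objPreimage b₂) ψ)))
    rw [e'_lft_comp hsq M' e' he' _ f.unop ψ]
    rw [← mapop_map M' _ (q.objObjPreimageIso b₂).hom]
    rw [mapop_mapop, mapop_mapop]
    have : (((q.objObjPreimageIso b₁'.unop).hom ≫ f.unop ≫
          (q.objObjPreimageIso b₁.unop).inv).op ≫ (q.objObjPreimageIso b₁'.unop).inv.op)
        = ((q.objObjPreimageIso b₁.unop).inv.op ≫ f) := by
      apply Quiver.Hom.unop_inj
      simp
    rw [this]

variable {q} in
lemma tau_compat (hsq : SqZero q) (M' : Bᵒᵖ ⥤ B ⥤ AddCommGrpCat.{v₁})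
    (e' : ∀ A₁ A₂ : A, qker q A₁ A₂ ≃+ (M'.obj (op (q.obj A₁))).obj (q.obj A₂))
    (he' : KernelBimoduleIso q M' e') (A₁ A₂ : A) (φ : A₁ ⟶ A₂) (hφ : q.map φ = 0) :
    ((tau hsq M' e' he').app (op (q.obj A₁))).app (q.obj A₂)
      (eker q hsq A₁ A₂ ⟨φ, hφ⟩) = e' A₁ A₂ ⟨φ, hφ⟩ := by
  show (M'.map (q.objObjPreimageIso (q.obj A₁)).inv.op).app (q.obj A₂)
      ((M'.obj (op (q.obj (q.objPreimage (q.obj A₁))))).map (q.objObjPreimageIso (q.obj A₂)).hom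
        (e' (q.objPreimage (q.obj A₁)) (q.objPreimage (q.obj A₂))
          ⟨preH q A₁ ≫ φ ≫ preI q A₂, by
            rw [mem_qker, q.map_comp, q.map_comp, hφ, zero_comp, comp_zero]⟩))
    = e' A₁ A₂ ⟨φ, hφ⟩
  rw [he' (q.objPreimage (q.obj A₁)) A₁ A₂ (q.objPreimage (q.obj A₂)) (preH q A₁) (preI q A₂) φ hφ]
  rw [q_preH, q_preI]
  rw [← mapop_map M' _ (q.objObjPreimageIso (q.obj A₂)).hom]
  rw [map_map]
  rw [mapop_mapop]
  have h1 : (q.objObjPreimageIso (q.obj A₂)).inv ≫ (q.objObjPreimageIso (q.obj A₂)).hom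
      = 𝟙 _ := Iso.inv_hom_id _
  have h2 : ((q.objObjPreimageIso (q.obj A₁)).hom.op ≫ (q.objObjPreimageIso (q.obj A₁)).inv.op)
      = 𝟙 (op (q.obj A₁)) := by
    rw [← op_comp, Iso.inv_hom_id, op_id]
  rw [h1, h2]
  simp

variable {q} in
lemma tau_unique (hsq : SqZero q) (M' : Bᵒᵖ ⥤ B ⥤ AddCommGrpCat.{v₁})
    (e' : ∀ A₁ A₂ : A, qker q A₁ A₂ ≃+ (M'.obj (op (q.obj A₁))).obj (q.obj A₂))
    (he' : KernelBimoduleIso q M' e') (σ : Mker q hsq ⟶ M')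
    (hσ : ∀ (A₁ A₂ : A) (φ : A₁ ⟶ A₂) (hφ : q.map φ = 0),
      (σ.app (op (q.obj A₁))).app (q.obj A₂) (eker q hsq A₁ A₂ ⟨φ, hφ⟩) = e' A₁ A₂ ⟨φ, hφ⟩) :
    σ = tau hsq M' e' he' := by
  ext b₁ b₂ ψ
  obtain ⟨ψv, ψp⟩ := ψ
  conv_lhs => rw [← recover q hsq b₁ b₂ ⟨ψv, ψp⟩]
  rw [bif_nat σ ((q.objObjPreimageIso b₁.unop).inv.op) b₂]
  refine (congrArg (fun z => (M'.map (q.objObjPreimageIso b₁.unop).inv.op).app b₂ z)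
    (nat_app (σ.app (op (q.obj (q.objPreimage b₁.unop)))) (q.objObjPreimageIso b₂).hom _).symm).trans ?_
  rw [hσ (q.objPreimage b₁.unop) (q.objPreimage b₂) ψv ψp]
  rfl

/-- Let `q : A → B` be a square-zero extension of additive categories
(`q` is essentially surjective, conservative, full, additive, and the composite of any
two morphisms killed by `q` is zero) with kernel bimodule `K`. Then there is a
`B`-bimodule `M` (an additive bifunctor `Bᵒᵖ × B → Ab`), unique up to unique
isomorphism, such that `K(A₁, A₂) ≅ M(q(A₁), q(A₂))` naturally in `A₁`, `A₂`. -/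
theorem squareZero_kernel_bimodule
    (q : A ⥤ B) [q.Additive] [q.Full] [q.EssSurj] [q.ReflectsIsomorphisms]
    (hsq : ∀ {X Y Z : A} (f : X ⟶ Y) (g : Y ⟶ Z), q.map f = 0 → q.map g = 0 → f ≫ g = 0) :
    ∃ (M : Bᵒᵖ ⥤ B ⥤ AddCommGrpCat.{v₁}) (_ : M.Additive) (_ : ∀ b : Bᵒᵖ, (M.obj b).Additive)
      (e : ∀ A₁ A₂ : A, qker q A₁ A₂ ≃+ (M.obj (op (q.obj A₁))).obj (q.obj A₂)),
      KernelBimoduleIso q M e ∧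
      ∀ (M' : Bᵒᵖ ⥤ B ⥤ AddCommGrpCat.{v₁}), M'.Additive → (∀ b : Bᵒᵖ, (M'.obj b).Additive) →
        ∀ (e' : ∀ A₁ A₂ : A, qker q A₁ A₂ ≃+ (M'.obj (op (q.obj A₁))).obj (q.obj A₂)),
          KernelBimoduleIso q M' e' →
          ∃! η : M ≅ M', ∀ (A₁ A₂ : A) (φ : A₁ ⟶ A₂) (hφ : q.map φ = 0),
            (η.hom.app (op (q.obj A₁))).app (q.obj A₂) (e A₁ A₂ ⟨φ, hφ⟩) =
              e' A₁ A₂ ⟨φ, hφ⟩ := by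
  have hsq' : SqZero q := fun f g hf hg => hsq f g hf hg
  refine ⟨Mker q hsq', Mker_additive q hsq', Mker_obj_additive q hsq', eker q hsq',
    eker_natural q hsq', ?_⟩
  intro M' hM'add hM'objadd e' he'
  haveI : ∀ b₁, IsIso ((tau hsq' M' e' he').app b₁) := by
    intro b₁
    haveI : ∀ b₂, IsIso (((tau hsq' M' e' he').app b₁).app b₂) := by
      intro b₂
      show IsIso
        (AddCommGrpCat.ofHom (e' (q.objPreimage b₁.unop) (q.objPreimage b₂)).toAddMonoidHom ≫
          (M'.obj (op (q.obj (q.objPreimage b₁.unop)))).map (q.objObjPreimageIso b₂).hom ≫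
          (M'.map (q.objObjPreimageIso b₁.unop).inv.op).app b₂)
      haveI : IsIso (AddCommGrpCat.ofHom
          (e' (q.objPreimage b₁.unop) (q.objPreimage b₂)).toAddMonoidHom) := by
        refine ⟨⟨AddCommGrpCat.ofHom
          (e' (q.objPreimage b₁.unop) (q.objPreimage b₂)).symm.toAddMonoidHom, ?_, ?_⟩⟩
        · ext x
          exact congrArg Subtype.val ((e' (q.objPreimage b₁.unop) (q.objPreimage b₂)).symm_apply_apply x)
        · ext y
          exact (e' (q.objPreimage b₁.unop) (q.objPreimage b₂)).apply_symm_apply y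
      infer_instance
    exact NatIso.isIso_of_isIso_app _
  haveI : IsIso (tau hsq' M' e' he') := NatIso.isIso_of_isIso_app _
  refine ⟨asIso (tau hsq' M' e' he'),
    fun A₁ A₂ φ hφ => tau_compat hsq' M' e' he' A₁ A₂ φ hφ, ?_⟩
  intro η' hη'
  apply Iso.ext
  exact tau_unique hsq' M' e' he' η'.hom hη'


end Main

end SquareZeroKernel
end

section
/- Let E be an exact category with a perpendicular torsion pair (T, F). Then E is weakly idempotent split if and only if both T and F are weakly idempotent split. -/
open CategoryTheory CategoryTheory.Limits ZeroObject

universe v u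

namespace ExactCatPaper

variable (E : Type u) [Category.{v} E] [Preadditive E] [HasZeroObject E]

variable {E}

/-- The full subcategory on `T` is weakly idempotent split: every retraction between
objects of `T` has a kernel in `T`. -/
def WeaklyIdemSplitOn (T : Set E) : Prop :=
  ∀ {X Y : E}, X ∈ T → Y ∈ T → ∀ (r : X ⟶ Y) (s : Y ⟶ X), s ≫ r = 𝟙 Y →
    ∃ (K : E) (k : K ⟶ X), K ∈ T ∧ k ≫ r = 0 ∧
      ∀ {W : E}, W ∈ T → ∀ f : W ⟶ X, f ≫ r = 0 → ∃! g : W ⟶ K, g ≫ k = f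

/-- Inflations (kernel parts of conflations) are monomorphisms: cancellation. -/
lemma ExactStructure.infl_cancel (S : ExactStructure E) {X Y Z : E} {i : X ⟶ Y} {d : Y ⟶ Z}
    (h : S.conf i d) {W : E} {a b : W ⟶ X} (hab : a ≫ i = b ≫ i) : a = b := by
  obtain ⟨g, -, hu⟩ := S.is_kernel h (b ≫ i)
    (by rw [Category.assoc, S.comp_zero h, Limits.comp_zero])
  rw [hu a hab, hu b rfl]

/-- Deflations (cokernel parts of conflations) are epimorphisms: cancellation. -/
lemma ExactStructure.defl_cancel (S : ExactStructure E) {X Y Z : E} {i : X ⟶ Y} {d : Y ⟶ Z}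
    (h : S.conf i d) {W : E} {a b : Z ⟶ W} (hab : d ≫ a = d ≫ b) : a = b := by
  obtain ⟨g, -, hu⟩ := S.is_cokernel h (d ≫ b)
    (by rw [← Category.assoc, S.comp_zero h, Limits.zero_comp])
  rw [hu a hab, hu b rfl]

/-- A split monomorphism is left-cancellable. -/
lemma mono_of_split {X Y : E} {k : X ⟶ Y} {π : Y ⟶ X} (h : k ≫ π = 𝟙 X)
    {W : E} {a b : W ⟶ X} (hab : a ≫ k = b ≫ k) : a = b := by
  calc a = (a ≫ k) ≫ π := by rw [Category.assoc, h, Category.comp_id]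
  _ = (b ≫ k) ≫ π := by rw [hab]
  _ = b := by rw [Category.assoc, h, Category.comp_id]

/-- In a weakly idempotent split subcategory, the kernel of a retraction is a
direct summand, with explicit splitting data. -/
lemma wis_split {T : Set E} (hT : WeaklyIdemSplitOn T) {X Y : E} (hX : X ∈ T) (hY : Y ∈ T)
    (r : X ⟶ Y) (s : Y ⟶ X) (hs : s ≫ r = 𝟙 Y) :
    ∃ (K : E) (k : K ⟶ X) (π : X ⟶ K), K ∈ T ∧ k ≫ r = 0 ∧ k ≫ π = 𝟙 K ∧
      π ≫ k = 𝟙 X - r ≫ s := by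
  obtain ⟨K, k, hK, hk0, huniv⟩ := hT hX hY r s hs
  obtain ⟨π, hπ, -⟩ := huniv hX (𝟙 X - r ≫ s)
    (by rw [Preadditive.sub_comp, Category.id_comp, Category.assoc, hs, Category.comp_id, sub_self])
  obtain ⟨g, -, hu⟩ := huniv hK k hk0
  have h1 : (k ≫ π) ≫ k = k := by
    rw [Category.assoc, hπ, Preadditive.comp_sub, Category.comp_id, ← Category.assoc, hk0,
      Limits.zero_comp, sub_zero]
  refine ⟨K, k, π, hK, hk0, ?_, hπ⟩
  rw [hu (k ≫ π) h1, hu (𝟙 K) (Category.id_comp k)]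

/-- Let `E` be an exact category with a perpendicular torsion pair
`(T, F)`. Then `E` is weakly idempotent split if and only if both `T` and `F` are. -/
theorem weaklyIdemSplit_iff_torsion_parts
    (S : ExactStructure E) (T F : Set E)
    (hText : ExtClosed S T) (hTiso : IsoClosed T)
    (hFext : ExtClosed S F) (hFiso : IsoClosed F)
    (h : IsPerpTorsionPair S T F) :
    WeaklyIdemSplitOn (Set.univ : Set E) ↔ (WeaklyIdemSplitOn T ∧ WeaklyIdemSplitOn F) := by
  constructor
  · -- E weakly idempotent split ⇒ T and F are
    intro hE
    constructor
    · -- T is weakly idempotent split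
      intro X Y hX hY r s hs
      obtain ⟨K, k, -, hk0, huniv⟩ := hE (Set.mem_univ X) (Set.mem_univ Y) r s hs
      obtain ⟨π, hπ, -⟩ := huniv (Set.mem_univ X) (𝟙 X - r ≫ s)
        (by rw [Preadditive.sub_comp, Category.id_comp, Category.assoc, hs, Category.comp_id, sub_self])
      obtain ⟨g, -, hu⟩ := huniv (Set.mem_univ K) k hk0
      have h1 : (k ≫ π) ≫ k = k := by
        rw [Category.assoc, hπ, Preadditive.comp_sub, Category.comp_id, ← Category.assoc, hk0,
          Limits.zero_comp, sub_zero]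
      have hkπ : k ≫ π = 𝟙 K := by rw [hu (k ≫ π) h1, hu (𝟙 K) (Category.id_comp k)]
      -- torsion decomposition of K
      obtain ⟨tK, fK, iK, dK, htK, hfK, hconfK⟩ := h.1.2 K
      -- the torsion-free quotient of K vanishes
      have hdK : dK = 0 := by
        have : π ≫ dK = 0 := h.1.1 X hX fK hfK (π ≫ dK)
        calc dK = (k ≫ π) ≫ dK := by rw [hkπ, Category.id_comp]
        _ = 0 := by rw [Category.assoc, this, Limits.comp_zero]
      -- hence iK is an isomorphism and K ∈ T
      obtain ⟨u, hu1, -⟩ := S.is_kernel hconfK (𝟙 K) (by rw [hdK, Limits.comp_zero])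
      have hu2 : iK ≫ u = 𝟙 tK := S.infl_cancel hconfK
        (by rw [Category.assoc, hu1, Category.comp_id, Category.id_comp])
      have hKT : K ∈ T := hTiso ⟨iK, u, hu2, hu1⟩ htK
      exact ⟨K, k, hKT, hk0, fun {W} _ f hf => huniv (Set.mem_univ W) f hf⟩
    · -- F is weakly idempotent split
      intro X Y hX hY r s hs
      obtain ⟨K, k, -, hk0, huniv⟩ := hE (Set.mem_univ X) (Set.mem_univ Y) r s hs
      obtain ⟨π, hπ, -⟩ := huniv (Set.mem_univ X) (𝟙 X - r ≫ s)
        (by rw [Preadditive.sub_comp, Category.id_comp, Category.assoc, hs, Category.comp_id, sub_self])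
      obtain ⟨g, -, hu⟩ := huniv (Set.mem_univ K) k hk0
      have h1 : (k ≫ π) ≫ k = k := by
        rw [Category.assoc, hπ, Preadditive.comp_sub, Category.comp_id, ← Category.assoc, hk0,
          Limits.zero_comp, sub_zero]
      have hkπ : k ≫ π = 𝟙 K := by rw [hu (k ≫ π) h1, hu (𝟙 K) (Category.id_comp k)]
      obtain ⟨tK, fK, iK, dK, htK, hfK, hconfK⟩ := h.1.2 K
      -- the torsion part of K vanishes
      have hiK : iK = 0 := by
        have h2 : iK ≫ k = 0 := h.1.1 tK htK X hX (iK ≫ k)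
        calc iK = iK ≫ (k ≫ π) := by rw [hkπ, Category.comp_id]
        _ = 0 := by rw [← Category.assoc, h2, Limits.zero_comp]
      obtain ⟨v, hv1, -⟩ := S.is_cokernel hconfK (𝟙 K) (by rw [hiK, Limits.zero_comp])
      have hv2 : v ≫ dK = 𝟙 fK := S.defl_cancel hconfK
        (by rw [← Category.assoc, hv1, Category.comp_id, Category.id_comp])
      have hKF : K ∈ F := hFiso ⟨v, dK, hv2, hv1⟩ hfK
      exact ⟨K, k, hKF, hk0, fun {W} _ f hf => huniv (Set.mem_univ W) f hf⟩
  · -- T and F weakly idempotent split ⇒ E is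
    rintro ⟨hT, hF⟩
    intro X Y _ _ r s hs
    -- torsion decompositions of X and Y
    obtain ⟨tX, fX, iX, dX, htX, hfX, hcX⟩ := h.1.2 X
    obtain ⟨tY, fY, iY, dY, htY, hfY, hcY⟩ := h.1.2 Y
    -- induced maps on torsion parts
    obtain ⟨tr, htr, -⟩ := S.is_kernel hcY (iX ≫ r) (h.1.1 tX htX fY hfY _)
    obtain ⟨ts, hts, -⟩ := S.is_kernel hcX (iY ≫ s) (h.1.1 tY htY fX hfX _)
    have htsr : ts ≫ tr = 𝟙 tY := S.infl_cancel hcY (by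
      rw [Category.assoc, htr, ← Category.assoc, hts, Category.assoc, hs,
        Category.comp_id, Category.id_comp])
    -- induced maps on torsion-free parts
    obtain ⟨fr, hfr, -⟩ := S.is_cokernel hcX (r ≫ dY) (h.1.1 tX htX fY hfY _)
    obtain ⟨fs, hfs, -⟩ := S.is_cokernel hcY (s ≫ dX) (h.1.1 tY htY fX hfX _)
    have hfsr : fs ≫ fr = 𝟙 fY := S.defl_cancel hcY (by
      rw [← Category.assoc, hfs, Category.assoc, hfr, ← Category.assoc, hs,
        Category.id_comp, Category.comp_id])
    -- split kernels of the induced retractions, inside T resp. F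
    obtain ⟨Kt, kt, πt, hKtT, hkt0, hktπ, hπkt⟩ := wis_split hT htX htY tr ts htsr
    obtain ⟨Kf, kf, πf, hKfF, hkf0, hkfπ, hπkf⟩ := wis_split hF hfX hfY fr fs hfsr
    have htsπt : ts ≫ πt = 0 := mono_of_split hktπ (by
      rw [Category.assoc, hπkt, Preadditive.comp_sub, Category.comp_id, ← Category.assoc, htsr,
        Category.id_comp, sub_self, Limits.zero_comp])
    -- pullback of dX along kf
    obtain ⟨P, p₁, p₂, hPB, A, i0, hc0⟩ := S.pullback_defl dX kf ⟨tX, iX, hcX⟩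
    have hiXdX : iX ≫ dX = 0 := S.comp_zero hcX
    obtain ⟨ti, hti1, hti2⟩ : ∃ ti : tX ⟶ P, ti ≫ p₁ = iX ∧ ti ≫ p₂ = 0 :=
      ⟨hPB.lift iX 0 (by rw [hiXdX, Limits.zero_comp]), hPB.lift_fst _ _ _, hPB.lift_snd _ _ _⟩
    -- `ti` is an inflation (isomorphic to the given kernel of p₂)
    obtain ⟨β, hβ, -⟩ := S.is_kernel hcX (i0 ≫ p₁) (by
      rw [Category.assoc, hPB.w, ← Category.assoc, S.comp_zero hc0, Limits.zero_comp])
    obtain ⟨α, hα, -⟩ := S.is_kernel hc0 ti hti2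
    have hαβ : α ≫ β = 𝟙 tX := S.infl_cancel hcX (by
      rw [Category.assoc, hβ, ← Category.assoc, hα, hti1, Category.id_comp])
    have hβti : β ≫ ti = i0 := hPB.hom_ext
      (by rw [Category.assoc, hti1]; exact hβ)
      (by rw [Category.assoc, hti2, Limits.comp_zero, S.comp_zero hc0])
    have hβα : β ≫ α = 𝟙 A := S.infl_cancel hc0 (by
      rw [Category.assoc, hα, hβti, Category.id_comp])
    have hconfti : S.conf ti p₂ := by
      have h5 := S.conf_iso (Iso.mk β α hβα hαβ) (Iso.refl P) (Iso.refl Kf) hc0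
      simpa [hα] using h5
    -- the retraction ρ : P → tY
    obtain ⟨ρ, hρ, -⟩ := S.is_kernel hcY (p₁ ≫ r) (by
      rw [Category.assoc, ← hfr, ← Category.assoc, hPB.w, Category.assoc, hkf0,
        Limits.comp_zero])
    have htiρ : ti ≫ ρ = tr := S.infl_cancel hcY (by
      rw [Category.assoc, hρ, ← Category.assoc, hti1, htr])
    have hσρ : (ts ≫ ti) ≫ ρ = 𝟙 tY := by rw [Category.assoc, htiρ, htsr]
    -- pushout of ti along πt
    obtain ⟨P', j, g, hPO, Z', d', -⟩ := S.pushout_infl ti πt ⟨Kf, p₂, hconfti⟩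
    -- the splitting k' : P' → P
    have hcl : ti ≫ (𝟙 P - ρ ≫ (ts ≫ ti)) = ti - tr ≫ (ts ≫ ti) := by
      rw [Preadditive.comp_sub, Category.comp_id, ← Category.assoc, htiρ]
    have hcr : πt ≫ (kt ≫ ti) = ti - tr ≫ (ts ≫ ti) := by
      rw [← Category.assoc, hπkt, Preadditive.sub_comp, Category.id_comp, Category.assoc]
    obtain ⟨k', hk'g0, hk'j0⟩ :
        ∃ k' : P' ⟶ P, g ≫ k' = 𝟙 P - ρ ≫ (ts ≫ ti) ∧ j ≫ k' = kt ≫ ti :=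
      ⟨hPO.desc _ _ (hcl.trans hcr.symm), hPO.inl_desc _ _ _, hPO.inr_desc _ _ _⟩
    have hk'g : k' ≫ g = 𝟙 P' := by
      apply hPO.hom_ext
      · rw [← Category.assoc, hk'g0, Preadditive.sub_comp, Category.id_comp, Category.comp_id,
          Category.assoc, Category.assoc, hPO.w, ← Category.assoc ts πt j, htsπt,
          Limits.zero_comp, Limits.comp_zero, sub_zero]
      · rw [← Category.assoc, hk'j0, Category.comp_id, Category.assoc, hPO.w,
          ← Category.assoc, hktπ, Category.id_comp]
    have hk'ρ : k' ≫ ρ = 0 := by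
      apply hPO.hom_ext
      · rw [← Category.assoc, hk'g0, Preadditive.sub_comp, Category.id_comp, Category.assoc, hσρ,
          Category.comp_id, sub_self, Limits.comp_zero]
      · rw [← Category.assoc, hk'j0, Category.assoc, htiρ, hkt0, Limits.comp_zero]
    -- assemble the kernel of r
    refine ⟨P', k' ≫ p₁, Set.mem_univ _, ?_, ?_⟩
    · rw [Category.assoc, ← hρ, ← Category.assoc, hk'ρ, Limits.zero_comp]
    · intro W _ w hw
      have hwfr : (w ≫ dX) ≫ fr = 0 := by
        rw [Category.assoc, hfr, ← Category.assoc, hw, Limits.zero_comp]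
      have hu : ((w ≫ dX) ≫ πf) ≫ kf = w ≫ dX := by
        rw [Category.assoc, hπkf, Preadditive.comp_sub, Category.comp_id, ← Category.assoc, hwfr,
          Limits.zero_comp, sub_zero]
      obtain ⟨wt, hwt1, hwt2⟩ : ∃ wt : W ⟶ P, wt ≫ p₁ = w ∧ wt ≫ p₂ = (w ≫ dX) ≫ πf :=
        ⟨hPB.lift w ((w ≫ dX) ≫ πf) hu.symm, hPB.lift_fst _ _ _, hPB.lift_snd _ _ _⟩
      have hwtρ : wt ≫ ρ = 0 := S.infl_cancel hcY (by
        rw [Category.assoc, hρ, ← Category.assoc, hwt1, hw, Limits.zero_comp])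
      refine ⟨wt ≫ g, ?_, ?_⟩
      · show (wt ≫ g) ≫ (k' ≫ p₁) = w
        rw [Category.assoc, ← Category.assoc g k' p₁, hk'g0, Preadditive.sub_comp, Category.id_comp,
          Preadditive.comp_sub, hwt1, Category.assoc, ← Category.assoc wt ρ, hwtρ, Limits.zero_comp,
          sub_zero]
      · intro g₁ hg₁
        have h3 : ((g₁ ≫ k') ≫ p₂) ≫ kf = ((w ≫ dX) ≫ πf) ≫ kf := by
          rw [Category.assoc, ← hPB.w, hu, ← Category.assoc, Category.assoc g₁ k' p₁, hg₁]
        have h2 : (g₁ ≫ k') ≫ p₂ = (w ≫ dX) ≫ πf := mono_of_split hkfπ h3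
        have h4 : g₁ ≫ k' = wt := hPB.hom_ext
          (by rw [Category.assoc, hg₁, hwt1])
          (by rw [h2, hwt2])
        calc g₁ = g₁ ≫ 𝟙 P' := (Category.comp_id g₁).symm
        _ = g₁ ≫ (k' ≫ g) := by rw [hk'g]
        _ = (g₁ ≫ k') ≫ g := by rw [Category.assoc]
        _ = wt ≫ g := by rw [h4]

end ExactCatPaper
end
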